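/- arXiv:math/0302344 — 2 statements merged into one kernel-verified Lean document; each statement's English description precedes it below -/
import Mathlib

section
/- Let F be a figure with equilibrium function eq and base vertex w₀, and let h,h'∈H_F. The minimal number of successive allowed flips (upward or downward, at forced components distinct from U_∞) needed to pass from h to h' is Δ(h,h')/4; moreover, in any such minimal sequence, the forced components on which flips are performed are exactly those components U with h(v_U)≠h'(v_U). -/
open Classical

noncomputable section

abbrev Vtx : Type := ℤ × ℤ
abbrev GArc : Type := Vtx × Vtx

/-- `a` is an arc of the grid graph `Λ⁺`: its endpoints differ by a unit vector. -/
def IsArc (a : GArc) : Prop :=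
  (a.2.1 - a.1.1).natAbs + (a.2.2 - a.1.2).natAbs = 1

/-- reversal of an arc -/
def arev (a : GArc) : GArc := (a.2, a.1)

/-- `+1` if the cell with lower-left corner `c` is black, `-1` if it is white
(checkerboard coloring). -/
def colorSign (c : Vtx) : ℤ := if (c.1 + c.2) % 2 = 0 then 1 else -1

/-- spin of an arc: `+1` if a traveler along the arc has a white cell on its left,
`-1` otherwise. -/
def sp (a : GArc) : ℤ :=
  colorSign a.1 * ((a.2.2 - a.1.2) ^ 2 - (a.2.1 - a.1.1) ^ 2)

/-- the arcs of a path/cycle given by its list of vertices -/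
def arcsOf (C : List Vtx) : List GArc := C.zip C.tail

/-- sum of a function `g` on arcs over all the arcs of `C` (with multiplicity) -/
def sumOn (g : GArc → ℤ) (C : List Vtx) : ℤ := ((arcsOf C).map g).sum

/-- a (closed) cycle of the grid -/
def IsCycle (C : List Vtx) : Prop :=
  2 ≤ C.length ∧ C.head? = C.getLast? ∧ ∀ a ∈ arcsOf C, IsArc a

/-- an elementary cycle: no repeated vertex except the endpoints -/
def IsElemCycle (C : List Vtx) : Prop := IsCycle C ∧ C.dropLast.Nodup

/-- contribution of an arc to the winding number of a cycle around the center of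
cell `c` (crossings of the horizontal ray going East from the center of `c`). -/
def windTerm (c : Vtx) (a : GArc) : ℤ :=
  if a.1.1 = a.2.1 ∧ c.1 < a.1.1 ∧ min a.1.2 a.2.2 = c.2 then a.2.2 - a.1.2 else 0

/-- winding number of the cycle `C` around the center of the cell `c` -/
def wind (C : List Vtx) (c : Vtx) : ℤ := sumOn (windTerm c) C

/-- a cycle is clockwise when its winding number around any cell is nonpositive
(`-1` on enclosed cells, `0` elsewhere) -/
def IsClockwise (C : List Vtx) : Prop := ∀ c : Vtx, wind C c ≤ 0

/-- a cell is enclosed by `C` when the winding number of `C` around it is nonzero -/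
def Encloses (C : List Vtx) (c : Vtx) : Prop := wind C c ≠ 0

/-- number of black cells minus number of white cells enclosed by a clockwise cycle -/
def Dis (C : List Vtx) : ℤ := -∑ᶠ c : Vtx, wind C c * colorSign c

/-- 4-adjacency of cells (shared edge) -/
def adj4 (c c' : Vtx) : Prop := (c'.1 - c.1).natAbs + (c'.2 - c.2).natAbs = 1

/-- 8-adjacency of cells (shared vertex at least) -/
def adj8 (c c' : Vtx) : Prop := c ≠ c' ∧ (c'.1 - c.1).natAbs ≤ 1 ∧ (c'.2 - c.2).natAbs ≤ 1

/-- a figure: a nonempty, finite, 4-connected set of cells such that no vertex has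
all its incident edges on the boundary (no diagonal pinch, so no vertex
duplication is needed). -/
def IsFigure (F : Finset Vtx) : Prop :=
  F.Nonempty ∧
  (∀ c ∈ F, ∀ c' ∈ F, Relation.ReflTransGen (fun x y => x ∈ F ∧ y ∈ F ∧ adj4 x y) c c') ∧
  (∀ x y : ℤ,
    ¬((x - 1, y - 1) ∈ F ∧ (x, y) ∈ F ∧ (x, y - 1) ∉ F ∧ (x - 1, y) ∉ F) ∧
    ¬((x, y - 1) ∈ F ∧ (x - 1, y) ∈ F ∧ (x - 1, y - 1) ∉ F ∧ (x, y) ∉ F))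

/-- one of the two cells adjacent to the edge `[a]` -/
def cellA (a : GArc) : Vtx :=
  if a.1.2 = a.2.2 then (min a.1.1 a.2.1, a.1.2) else (a.1.1, min a.1.2 a.2.2)

/-- the other cell adjacent to the edge `[a]` -/
def cellB (a : GArc) : Vtx :=
  if a.1.2 = a.2.2 then (min a.1.1 a.2.1, a.1.2 - 1) else (a.1.1 - 1, min a.1.2 a.2.2)

/-- arcs of the graph `G_F`: the edge `[a]` is a side of a cell of `F` -/
def ArcF (F : Finset Vtx) (a : GArc) : Prop := IsArc a ∧ (cellA a ∈ F ∨ cellB a ∈ F)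

/-- boundary arcs of `F`: exactly one of the two adjacent cells is in `F` -/
def BoundaryArcF (F : Finset Vtx) (a : GArc) : Prop :=
  IsArc a ∧ ¬(cellA a ∈ F ↔ cellB a ∈ F)

/-- interior arcs of `F`: both adjacent cells are in `F` -/
def InteriorArcF (F : Finset Vtx) (a : GArc) : Prop :=
  IsArc a ∧ cellA a ∈ F ∧ cellB a ∈ F

/-- `v` is a corner of the cell with lower-left corner `c` -/
def isCorner (v c : Vtx) : Prop :=
  (v.1 = c.1 ∨ v.1 = c.1 + 1) ∧ (v.2 = c.2 ∨ v.2 = c.2 + 1)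

/-- vertices of `G_F`: the corners of the cells of `F` -/
def VF (F : Finset Vtx) : Set Vtx := {v | ∃ c ∈ F, isCorner v c}

/-- a cycle of the graph `G_F` -/
def IsCycleF (F : Finset Vtx) (C : List Vtx) : Prop :=
  2 ≤ C.length ∧ C.head? = C.getLast? ∧ ∀ a ∈ arcsOf C, ArcF F a

/-- an elementary cycle of the graph `G_F` -/
def IsElemCycleF (F : Finset Vtx) (C : List Vtx) : Prop :=
  IsCycleF F C ∧ C.dropLast.Nodup

/-- number of black cells of `F` minus number of white cells of `F` enclosed by
the clockwise cycle `C` -/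
def DisF (F : Finset Vtx) (C : List Vtx) : ℤ := -∑ c ∈ F, wind C c * colorSign c

/-- `ef` is skew-symmetric on the arcs of `G_F` -/
def IsSkewOnF (F : Finset Vtx) (ef : GArc → ℤ) : Prop :=
  ∀ a, ArcF F a → ef (arev a) = -ef a

/-- an equilibrium function of the figure `F` -/
def IsEquilibrium (F : Finset Vtx) (ef : GArc → ℤ) : Prop :=
  IsSkewOnF F ef ∧
  ∀ C, IsElemCycleF F C → IsClockwise C → sumOn sp C + sumOn ef C = 4 * DisF F C

/-- the four sides of the cell `c`, as canonically oriented arcs -/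
def sides (c : Vtx) : List GArc :=
  [((c.1, c.2), (c.1 + 1, c.2)), ((c.1, c.2 + 1), (c.1 + 1, c.2 + 1)),
   ((c.1, c.2), (c.1, c.2 + 1)), ((c.1 + 1, c.2), (c.1 + 1, c.2 + 1))]

/-- a domino tiling of `F`, encoded by the symmetric set `D` of the arcs whose
underlying edges are the central axes of its dominoes: every central axis has
both of its adjacent cells in `F` (dominoes are included in `F`), and every cell
of `F` is covered by exactly one domino (exactly one of its sides is a central
axis): no overlap and no gap. -/
def IsTiling (F : Finset Vtx) (D : Set GArc) : Prop :=
  (∀ a ∈ D, arev a ∈ D) ∧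
  (∀ a ∈ D, IsArc a ∧ cellA a ∈ F ∧ cellB a ∈ F) ∧
  (∀ c ∈ F, ∃! a, a ∈ sides c ∧ a ∈ D)

/-- characteristic function of a tiling: `1` on central axes, `0` elsewhere -/
def chi (D : Set GArc) (a : GArc) : ℤ := if a ∈ D then 1 else 0

/-- the height difference function of a tiling -/
def gT (ef : GArc → ℤ) (D : Set GArc) (a : GArc) : ℤ :=
  ef a - sp a + 2 * sp a * (1 - 2 * chi D a)

/-- the function `t`: `eq(a)-sp(a)+2` on interior arcs, `eq(a)+sp(a)` on boundary arcs -/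
def tArc (F : Finset Vtx) (ef : GArc → ℤ) (a : GArc) : ℤ :=
  if cellA a ∈ F ∧ cellB a ∈ F then ef a - sp a + 2 else ef a + sp a

/-- the function `b`: `eq(a)-sp(a)-2` on interior arcs, `eq(a)+sp(a)` on boundary arcs -/
def bArc (F : Finset Vtx) (ef : GArc → ℤ) (a : GArc) : ℤ :=
  if cellA a ∈ F ∧ cellB a ∈ F then ef a - sp a - 2 else ef a + sp a

/-- the 8-connected component of the cell `c` in the complement of `F` -/
def comp8 (F : Finset Vtx) (c : Vtx) : Set Vtx :=
  {c' | Relation.ReflTransGen (fun x y => x ∉ F ∧ y ∉ F ∧ adj8 x y) c c'}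

/-- `c` belongs to a hole of `F` (a finite 8-connected component of the complement) -/
def IsHoleCell (F : Finset Vtx) (c : Vtx) : Prop := c ∉ F ∧ (comp8 F c).Finite

/-- `c` belongs to `H_∞`, the infinite 8-connected component of the complement -/
def IsHinfCell (F : Finset Vtx) (c : Vtx) : Prop := c ∉ F ∧ ¬(comp8 F c).Finite

/-- `w` is a vertex of `V_F` on the boundary of `H_∞` -/
def OnOuterBoundary (F : Finset Vtx) (w : Vtx) : Prop :=
  w ∈ VF F ∧ ∃ c, IsHinfCell F c ∧ isCorner w c

/-- vertices on the boundary of `F` -/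
def Vb (F : Finset Vtx) : Set Vtx :=
  {v | (∃ c ∈ F, isCorner v c) ∧ ∃ c, c ∉ F ∧ isCorner v c}

/-- `h` belongs to the class `H_F` of height functions -/
def InHF (F : Finset Vtx) (ef : GArc → ℤ) (w0 : Vtx) (h : Vtx → ℤ) : Prop :=
  h w0 = 0 ∧ ∀ a, ArcF F a →
    (h a.2 - h a.1 = bArc F ef a ∨ h a.2 - h a.1 = tArc F ef a)

/-- `h` is the height function induced by the tiling `D` (based at `w0`) -/
def IsHeightOf (F : Finset Vtx) (ef : GArc → ℤ) (D : Set GArc) (w0 : Vtx)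
    (h : Vtx → ℤ) : Prop :=
  h w0 = 0 ∧ ∀ a, ArcF F a → h a.2 - h a.1 = gT ef D a

/-- a critical cycle: an elementary cycle of `G_F` with `t(C) = 0` -/
def CriticalCycle (F : Finset Vtx) (ef : GArc → ℤ) (C : List Vtx) : Prop :=
  IsElemCycleF F C ∧ sumOn (tArc F ef) C = 0

/-- a strongly critical cycle: critical, and `sp(a) = 1` on all its interior arcs -/
def StronglyCriticalCycle (F : Finset Vtx) (ef : GArc → ℤ) (C : List Vtx) : Prop :=
  CriticalCycle F ef C ∧ ∀ a ∈ arcsOf C, InteriorArcF F a → sp a = 1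

/-- two vertices are critically equivalent when some critical cycle passes
through both -/
def critRel (F : Finset Vtx) (ef : GArc → ℤ) (v v' : Vtx) : Prop :=
  ∃ C, CriticalCycle F ef C ∧ v ∈ C ∧ v' ∈ C

/-- the forced component of the vertex `v` (class of the equivalence relation
generated by critical equivalence) -/
def fcomp (F : Finset Vtx) (ef : GArc → ℤ) (v : Vtx) : Set Vtx :=
  {v' | v' ∈ VF F ∧ Relation.EqvGen (critRel F ef) v v'}

/-- `S` is a forced component of `F` -/
def IsForcedComponent (F : Finset Vtx) (ef : GArc → ℤ) (S : Set Vtx) : Prop :=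
  ∃ v ∈ VF F, S = fcomp F ef v

/-- `a` is an arc of the graph `G_T` of the tiling `D` -/
def GTArc (F : Finset Vtx) (ef : GArc → ℤ) (D : Set GArc) (a : GArc) : Prop :=
  ArcF F a ∧ gT ef D a = tArc F ef a

/-- there is a directed path in `G_T` from `u` to `v` -/
def GTReach (F : Finset Vtx) (ef : GArc → ℤ) (D : Set GArc) (u v : Vtx) : Prop :=
  Relation.ReflTransGen (fun x y => GTArc F ef D (x, y)) u v

/-- the result of an upward flip on the component `S`: add `4` on `S` -/
def flipUpAt (S : Set Vtx) (h : Vtx → ℤ) : Vtx → ℤ :=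
  fun v => h v + S.indicator (fun _ => (4 : ℤ)) v

/-- the result of a downward flip on the component `S`: subtract `4` on `S` -/
def flipDownAt (S : Set Vtx) (h : Vtx → ℤ) : Vtx → ℤ :=
  fun v => h v - S.indicator (fun _ => (4 : ℤ)) v

/-- `|h(v_S) - h'(v_S)|` for a representative `v_S` of `S` -/
def compDiff (h h' : Vtx → ℤ) (S : Set Vtx) : ℤ :=
  if hS : S.Nonempty then |h hS.some - h' hS.some| else 0

/-- the distance `Δ(h,h') = Σ_U |h(v_U) - h'(v_U)|` over forced components `U` -/
def Delta (F : Finset Vtx) (ef : GArc → ℤ) (h h' : Vtx → ℤ) : ℤ :=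
  ∑ᶠ S ∈ {S : Set Vtx | IsForcedComponent F ef S}, compDiff h h' S

/-- a sequence of `n` allowed upward flips at forced components distinct from `U_∞` -/
def UpFlipSeq (F : Finset Vtx) (ef : GArc → ℤ) (w0 : Vtx) (f : ℕ → Vtx → ℤ)
    (n : ℕ) : Prop :=
  ∀ i < n, ∃ S, IsForcedComponent F ef S ∧ S ≠ fcomp F ef w0 ∧
    InHF F ef w0 (f i) ∧ InHF F ef w0 (f (i + 1)) ∧ f (i + 1) = flipUpAt S (f i)

/-- a sequence of `n` allowed (upward or downward) flips, flipping at step `i`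
the forced component `s i` (distinct from `U_∞`) -/
def FlipSeq (F : Finset Vtx) (ef : GArc → ℤ) (w0 : Vtx) (f : ℕ → Vtx → ℤ)
    (s : ℕ → Set Vtx) (n : ℕ) : Prop :=
  ∀ i < n, IsForcedComponent F ef (s i) ∧ s i ≠ fcomp F ef w0 ∧
    InHF F ef w0 (f i) ∧ InHF F ef w0 (f (i + 1)) ∧
    (f (i + 1) = flipUpAt (s i) (f i) ∨ f (i + 1) = flipDownAt (s i) (f i))

/-- the four arcs of the two horizontal edges through `v` (central axes of the
pair of vertical dominoes covering the 2×2 square centered at `v`) -/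
def hPairAxes (v : Vtx) : Set GArc :=
  {((v.1 - 1, v.2), v), (v, (v.1 - 1, v.2)), (v, (v.1 + 1, v.2)), ((v.1 + 1, v.2), v)}

/-- the four arcs of the two vertical edges through `v` (central axes of the
pair of horizontal dominoes covering the 2×2 square centered at `v`) -/
def vPairAxes (v : Vtx) : Set GArc :=
  {((v.1, v.2 - 1), v), (v, (v.1, v.2 - 1)), (v, (v.1, v.2 + 1)), ((v.1, v.2 + 1), v)}

/-- a local flip: replace the pair of dominoes covering a 2×2 square by the
other pair covering the same square -/
def LocalFlip (D D' : Set GArc) : Prop :=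
  ∃ v : Vtx, (hPairAxes v ⊆ D ∧ D' = (D \ hPairAxes v) ∪ vPairAxes v) ∨
             (vPairAxes v ⊆ D ∧ D' = (D \ vPairAxes v) ∪ hPairAxes v)

/-- a sequence of `n` local flips between tilings of `F` -/
def LocalFlipSeq (F : Finset Vtx) (g : ℕ → Set GArc) (n : ℕ) : Prop :=
  ∀ i < n, IsTiling F (g i) ∧ IsTiling F (g (i + 1)) ∧ LocalFlip (g i) (g (i + 1))

/-- `h` is a maximal element of `(H_F, ≤)` -/
def MaximalInHF (F : Finset Vtx) (ef : GArc → ℤ) (w0 : Vtx) (h : Vtx → ℤ) : Prop :=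
  InHF F ef w0 h ∧ ∀ h', InHF F ef w0 h' →
    (∀ v ∈ VF F, h v ≤ h' v) → ∀ v ∈ VF F, h' v = h v

/-- `h` is a minimal element of `(H_F, ≤)` -/
def MinimalInHF (F : Finset Vtx) (ef : GArc → ℤ) (w0 : Vtx) (h : Vtx → ℤ) : Prop :=
  InHF F ef w0 h ∧ ∀ h', InHF F ef w0 h' →
    (∀ v ∈ VF F, h' v ≤ h v) → ∀ v ∈ VF F, h' v = h v

/-- an elementary cycle of `G_F` enclosing a single cell of `F` -/
def AroundSingleCell (F : Finset Vtx) (C : List Vtx) : Prop :=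
  IsElemCycleF F C ∧ ∃ c ∈ F, ∀ c' : Vtx, wind C c' ≠ 0 ↔ c' = c

/-- a cycle of `G_F` following clockwise the boundary of a hole of `F`: it
winds `-1` around each cell of the hole and `0` around every other cell -/
def IsClockwiseHoleContour (F : Finset Vtx) (C : List Vtx) : Prop :=
  IsElemCycleF F C ∧ ∃ c₀, IsHoleCell F c₀ ∧
    (∀ c ∈ comp8 F c₀, wind C c = -1) ∧ (∀ c ∉ comp8 F c₀, wind C c = 0)

end
namespace MFD

/-- the four possible shapes of an arc -/
lemma isArc_cases {a : GArc} (ha : IsArc a) :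
    (a.2.1 = a.1.1 + 1 ∧ a.2.2 = a.1.2) ∨ (a.2.1 = a.1.1 - 1 ∧ a.2.2 = a.1.2) ∨
    (a.2.1 = a.1.1 ∧ a.2.2 = a.1.2 + 1) ∨ (a.2.1 = a.1.1 ∧ a.2.2 = a.1.2 - 1) := by
  unfold IsArc at ha; omega

lemma isArc_arev {a : GArc} (ha : IsArc a) : IsArc (arev a) := by
  unfold IsArc at *; unfold arev; simp only; omega

lemma arev_arev (a : GArc) : arev (arev a) = a := rfl

lemma isArc_ne {a : GArc} (ha : IsArc a) : a.1 ≠ a.2 := by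
  rcases isArc_cases ha with ⟨h1,h2⟩|⟨h1,h2⟩|⟨h1,h2⟩|⟨h1,h2⟩ <;>
    (intro h; rw [h] at h1 h2; omega)

lemma cellA_arev {a : GArc} (ha : IsArc a) : cellA (arev a) = cellA a := by
  obtain ⟨⟨x1,y1⟩,⟨x2,y2⟩⟩ := a
  rcases isArc_cases ha with ⟨h1,h2⟩|⟨h1,h2⟩|⟨h1,h2⟩|⟨h1,h2⟩ <;> simp only at h1 h2 <;>
    clear ha <;> subst h1 <;> subst h2 <;> unfold cellA arev <;> dsimp only <;>
    simp only [min_def] <;> split_ifs <;> simp only [Prod.mk.injEq] <;> omega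

lemma cellB_arev {a : GArc} (ha : IsArc a) : cellB (arev a) = cellB a := by
  obtain ⟨⟨x1,y1⟩,⟨x2,y2⟩⟩ := a
  rcases isArc_cases ha with ⟨h1,h2⟩|⟨h1,h2⟩|⟨h1,h2⟩|⟨h1,h2⟩ <;> simp only at h1 h2 <;>
    clear ha <;> subst h1 <;> subst h2 <;> unfold cellB arev <;> dsimp only <;>
    simp only [min_def] <;> split_ifs <;> simp only [Prod.mk.injEq] <;> omega

lemma sp_arev {a : GArc} (ha : IsArc a) : sp (arev a) = - sp a := by
  obtain ⟨⟨x1,y1⟩,⟨x2,y2⟩⟩ := a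
  rcases isArc_cases ha with ⟨h1,h2⟩|⟨h1,h2⟩|⟨h1,h2⟩|⟨h1,h2⟩ <;> simp only at h1 h2 <;>
    clear ha <;> subst h1 <;> subst h2 <;> unfold sp arev colorSign <;> dsimp only <;>
    split_ifs with hi1 hi2 <;> first | (exfalso; omega) | ring

lemma arcF_arev {F : Finset Vtx} {a : GArc} (ha : ArcF F a) : ArcF F (arev a) := by
  refine ⟨isArc_arev ha.1, ?_⟩
  rw [cellA_arev ha.1, cellB_arev ha.1]; exact ha.2

/-- endpoints of arcs of `G_F` are vertices of `G_F` -/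
lemma arcF_fst_mem_VF {F : Finset Vtx} {a : GArc} (ha : ArcF F a) : a.1 ∈ VF F := by
  obtain ⟨hisa, hc⟩ := ha
  obtain ⟨⟨x1,y1⟩,⟨x2,y2⟩⟩ := a
  rcases hc with hc | hc
  · refine ⟨_, hc, ?_⟩
    rcases isArc_cases hisa with ⟨h1,h2⟩|⟨h1,h2⟩|⟨h1,h2⟩|⟨h1,h2⟩ <;> simp only at h1 h2 <;>
      clear hisa <;> subst h1 <;> subst h2 <;> unfold cellA isCorner <;>
      simp only [min_def] <;> split_ifs <;> dsimp only <;> omega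
  · refine ⟨_, hc, ?_⟩
    rcases isArc_cases hisa with ⟨h1,h2⟩|⟨h1,h2⟩|⟨h1,h2⟩|⟨h1,h2⟩ <;> simp only at h1 h2 <;>
      clear hisa <;> subst h1 <;> subst h2 <;> unfold cellB isCorner <;>
      simp only [min_def] <;> split_ifs <;> dsimp only <;> omega

lemma arcF_snd_mem_VF {F : Finset Vtx} {a : GArc} (ha : ArcF F a) : a.2 ∈ VF F :=
  arcF_fst_mem_VF (arcF_arev ha)

end MFD
namespace MFD

lemma arcsOf_nil : arcsOf [] = [] := rfl
lemma arcsOf_single (x : Vtx) : arcsOf [x] = [] := rfl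
lemma arcsOf_cons2 (x y : Vtx) (l : List Vtx) :
    arcsOf (x :: y :: l) = (x,y) :: arcsOf (y :: l) := rfl

lemma arcsOf_append (l₁ : List Vtx) (x : Vtx) (l₂ : List Vtx) :
    arcsOf (l₁ ++ x :: l₂) = arcsOf (l₁ ++ [x]) ++ arcsOf (x :: l₂) := by
  induction l₁ with
  | nil => rfl
  | cons y t ih =>
    cases t with
    | nil => rfl
    | cons z t' =>
      simp only [List.cons_append, arcsOf_cons2]
      simp only [List.cons_append] at ih
      rw [ih]

/-- telescoping sum of differences along a path -/
lemma sum_diff (g : Vtx → ℤ) : ∀ (l : List Vtx) (x : Vtx),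
    ((arcsOf (x :: l)).map (fun a => g a.2 - g a.1)).sum = g (l.getLastD x) - g x := by
  intro l
  induction l with
  | nil => intro x; simp [arcsOf_single]
  | cons y t ih =>
    intro x
    rw [arcsOf_cons2]
    simp only [List.map_cons, List.sum_cons, ih y, List.getLastD_cons]
    ring

/-- the sum of differences along a closed walk is zero -/
lemma sum_diff_closed (g : Vtx → ℤ) (l : List Vtx) (hcl : l.head? = l.getLast?) :
    ((arcsOf l).map (fun a => g a.2 - g a.1)).sum = 0 := by
  cases l with
  | nil => rfl
  | cons x t =>
    rw [sum_diff g t x]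
    have h1 : t.getLastD x = x := by
      have h2 : (x :: t).getLastD x = t.getLastD x := List.getLastD_cons
      rw [List.getLastD_eq_getLast?, ← hcl] at h2
      simpa using h2.symm
    rw [h1]; ring

lemma list_sum_zero_of_nonneg : ∀ (l : List ℤ), (∀ x ∈ l, 0 ≤ x) → l.sum = 0 →
    ∀ x ∈ l, x = 0 := by
  intro l
  induction l with
  | nil => simp
  | cons a t ih =>
    intro hpos hsum x hx
    have ha : 0 ≤ a := hpos a (by simp)
    have ht : 0 ≤ t.sum := List.sum_nonneg (fun y hy => hpos y (by simp [hy]))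
    simp only [List.sum_cons] at hsum
    rw [List.mem_cons] at hx
    rcases hx with rfl | hx
    · omega
    · exact ih (fun y hy => hpos y (by simp [hy])) (by omega) x hx

/-- a value constant along consecutive vertices of a list is constant on the list -/
lemma chain_const {α : Type*} (g : Vtx → α) : ∀ (l : List Vtx),
    (∀ a ∈ arcsOf l, g a.1 = g a.2) → ∀ x ∈ l, ∀ y ∈ l, g x = g y := by
  intro l
  induction l with
  | nil => simp
  | cons v t ih =>
    intro harc
    suffices hh : ∀ x ∈ v :: t, g x = g v by
      intro x hx y hy; rw [hh x hx, hh y hy]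
    intro x hx
    cases t with
    | nil => simp at hx; rw [hx]
    | cons z t' =>
      have h1 : g v = g z := harc (v, z) (by rw [arcsOf_cons2]; simp)
      have ih' := ih (fun a ha => harc a (by rw [arcsOf_cons2]; simp [ha]))
      rw [List.mem_cons] at hx
      rcases hx with rfl | hx
      · rfl
      · rw [ih' x hx z (by simp), ← h1]

/-- reachability from the head of a list whose arcs all satisfy `r` -/
lemma reach_from_head (r : Vtx → Vtx → Prop) : ∀ (l : List Vtx) (v : Vtx),
    (∀ a ∈ arcsOf (v :: l), r a.1 a.2) → ∀ y ∈ v :: l, Relation.ReflTransGen r v y := by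
  intro l
  induction l with
  | nil => intro v _ y hy; simp at hy; rw [hy]
  | cons z t ih =>
    intro v harc y hy
    rw [List.mem_cons] at hy
    rcases hy with rfl | hy
    · exact Relation.ReflTransGen.refl
    · have h1 : r v z := harc (v, z) (by rw [arcsOf_cons2]; simp)
      have := ih z (fun a ha => harc a (by rw [arcsOf_cons2]; simp [ha])) y hy
      exact Relation.ReflTransGen.trans (Relation.ReflTransGen.single h1) this

/-- reachability to the last element of a list whose arcs all satisfy `r` -/
lemma reach_to_last (r : Vtx → Vtx → Prop) : ∀ (l : List Vtx) (v : Vtx),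
    (∀ a ∈ arcsOf (v :: l), r a.1 a.2) →
    ∀ x ∈ v :: l, Relation.ReflTransGen r x ((v :: l).getLast (by simp)) := by
  intro l
  induction l with
  | nil => intro v _ x hx; simp at hx; rw [hx]; exact Relation.ReflTransGen.refl
  | cons z t ih =>
    intro v harc x hx
    have harc' : ∀ a ∈ arcsOf (z :: t), r a.1 a.2 :=
      fun a ha => harc a (by rw [arcsOf_cons2]; simp [ha])
    rw [List.getLast_cons (by simp)]
    rw [List.mem_cons] at hx
    rcases hx with rfl | hx
    · have h1 : r x z := harc (x, z) (by rw [arcsOf_cons2]; simp)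
      exact Relation.ReflTransGen.trans (Relation.ReflTransGen.single h1)
        (ih z harc' z (by simp))
    · exact ih z harc' x hx

/-- along a closed walk whose arcs satisfy `r`, any two vertices are mutually
`ReflTransGen r`-reachable -/
lemma reach_on_closed (r : Vtx → Vtx → Prop) (l : List Vtx) (hcl : l.head? = l.getLast?)
    (harc : ∀ a ∈ arcsOf l, r a.1 a.2) :
    ∀ x ∈ l, ∀ y ∈ l, Relation.ReflTransGen r x y := by
  cases l with
  | nil => simp
  | cons v t =>
    intro x hx y hy
    have hlast : (v :: t).getLast? = some ((v :: t).getLast (by simp)) :=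
      List.getLast?_eq_getLast (by simp)
    rw [hlast] at hcl
    simp only [List.head?_cons, Option.some.injEq] at hcl
    have h1 := reach_to_last r t v harc x hx
    have h2 := reach_from_head r t v harc y hy
    rw [← hcl] at h1
    exact Relation.ReflTransGen.trans h1 h2

/-- extraction of a duplicate -/
lemma exists_dup_split : ∀ (l : List Vtx), ¬ l.Nodup →
    ∃ (u : Vtx) (A B C : List Vtx), l = A ++ u :: B ++ u :: C := by
  intro l
  induction l with
  | nil => intro h; exact absurd List.nodup_nil h
  | cons x t ih =>
    intro h
    by_cases hx : x ∈ t
    · obtain ⟨s, t', rfl⟩ := List.append_of_mem hx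
      exact ⟨x, [], s, t', rfl⟩
    · have : ¬ t.Nodup := fun hn => h (List.nodup_cons.2 ⟨hx, hn⟩)
      obtain ⟨u, A, B, C, rfl⟩ := ih this
      exact ⟨u, x :: A, B, C, rfl⟩

end MFD
namespace MFD

lemma list_sum_map_sub {α : Type*} (l : List α) (f g : α → ℤ) :
    (l.map (fun x => f x - g x)).sum = (l.map f).sum - (l.map g).sum := by
  induction l with
  | nil => simp
  | cons a t ih => simp only [List.map_cons, List.sum_cons, ih]; ring

variable {F : Finset Vtx} {ef : GArc → ℤ} {w0 : Vtx} {h h' : Vtx → ℤ}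

lemma bArc_le_tArc (a : GArc) : bArc F ef a ≤ tArc F ef a := by
  unfold bArc tArc; split_ifs <;> omega

lemma tArc_sub_bArc (a : GArc) : tArc F ef a - bArc F ef a = 0 ∨ tArc F ef a - bArc F ef a = 4 := by
  unfold bArc tArc; split_ifs <;> omega

lemma tArc_arev (hef : IsEquilibrium F ef) {a : GArc} (ha : ArcF F a) :
    tArc F ef (arev a) = - bArc F ef a := by
  unfold tArc bArc
  rw [cellA_arev ha.1, cellB_arev ha.1, hef.1 a ha, sp_arev ha.1]
  split_ifs <;> ring

lemma bArc_arev (hef : IsEquilibrium F ef) {a : GArc} (ha : ArcF F a) :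
    bArc F ef (arev a) = - tArc F ef a := by
  have := tArc_arev hef (arcF_arev ha)
  rw [arev_arev] at this
  omega

lemma diff_mem (hh : InHF F ef w0 h) {a : GArc} (ha : ArcF F a) :
    h a.2 - h a.1 = bArc F ef a ∨ h a.2 - h a.1 = tArc F ef a := hh.2 a ha

lemma diff_le_tArc (hh : InHF F ef w0 h) {a : GArc} (ha : ArcF F a) :
    h a.2 - h a.1 ≤ tArc F ef a := by
  rcases hh.2 a ha with hd | hd
  · rw [hd]; exact bArc_le_tArc a
  · rw [hd]

/-- reversal: the difference along `a` equals `b a` iff along `arev a` it equals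
`t (arev a)` -/
lemma diff_bArc_iff (hef : IsEquilibrium F ef) (hh : InHF F ef w0 h) {a : GArc}
    (ha : ArcF F a) :
    h a.2 - h a.1 = bArc F ef a ↔ h (arev a).2 - h (arev a).1 = tArc F ef (arev a) := by
  rw [tArc_arev hef ha]; unfold arev; dsimp only; omega

/-- every `h ∈ H_F` follows the `t` increments along a critical cycle -/
lemma crit_forces (hh : InHF F ef w0 h) {C : List Vtx} (hC : CriticalCycle F ef C) :
    ∀ a ∈ arcsOf C, h a.2 - h a.1 = tArc F ef a := by
  obtain ⟨⟨⟨hlen, hcl, harc⟩, hnd⟩, hcrit⟩ := hC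
  have hsum0 : ((arcsOf C).map (fun a => h a.2 - h a.1)).sum = 0 := sum_diff_closed h C hcl
  have hLsum : ((arcsOf C).map (fun a => tArc F ef a - (h a.2 - h a.1))).sum = 0 := by
    rw [list_sum_map_sub]
    have : ((arcsOf C).map (fun a => tArc F ef a)).sum = 0 := hcrit
    rw [this, hsum0]; ring
  intro a haC
  have := list_sum_zero_of_nonneg _
    (by
      intro x hx
      rw [List.mem_map] at hx
      obtain ⟨b, hb, rfl⟩ := hx
      have := diff_le_tArc hh (harc b hb)
      omega)
    hLsum (tArc F ef a - (h a.2 - h a.1)) (List.mem_map_of_mem (f := fun a => tArc F ef a - (h a.2 - h a.1)) haC)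
  omega

/-- `h - h'` is constant on forced components -/
lemma eqvgen_const (hh : InHF F ef w0 h) (hh' : InHF F ef w0 h') {v v' : Vtx}
    (he : Relation.EqvGen (critRel F ef) v v') : h v - h' v = h v' - h' v' := by
  induction he with
  | rel x y hr =>
    obtain ⟨C, hC, hx, hy⟩ := hr
    exact chain_const (fun z => h z - h' z) C
      (fun a ha => by
        have h1 := crit_forces hh hC a ha
        have h2 := crit_forces hh' hC a ha
        show h a.1 - h' a.1 = h a.2 - h' a.2
        omega) x hx y hy
  | refl x => rfl
  | symm x y _ ih => omega
  | trans x y z _ _ ih1 ih2 => omega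

/-- the two-arc cycle on a boundary edge is critical -/
lemma boundary_crit (hef : IsEquilibrium F ef) {a : GArc} (ha : ArcF F a)
    (hnb : ¬(cellA a ∈ F ∧ cellB a ∈ F)) :
    CriticalCycle F ef [a.1, a.2, a.1] := by
  have hrev : ((a.2, a.1) : GArc) = arev a := rfl
  have heta : ((a.1, a.2) : GArc) = a := rfl
  have harcs : arcsOf [a.1, a.2, a.1] = [(a.1, a.2), (a.2, a.1)] := rfl
  refine ⟨⟨⟨by simp, by simp, ?_⟩, ?_⟩, ?_⟩
  · intro b hb
    rw [harcs] at hb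
    simp only [List.mem_cons, List.not_mem_nil, or_false] at hb
    rcases hb with rfl | rfl
    · rw [heta]; exact ha
    · rw [hrev]; exact arcF_arev ha
  · simp [List.dropLast, isArc_ne ha.1]
  · show ((arcsOf [a.1, a.2, a.1]).map (tArc F ef)).sum = 0
    rw [harcs]
    simp only [List.map_cons, List.map_nil, List.sum_cons, List.sum_nil, add_zero]
    rw [heta, hrev]
    unfold tArc
    rw [cellA_arev ha.1, cellB_arev ha.1, hef.1 a ha, sp_arev ha.1]
    rw [if_neg hnb, if_neg hnb]
    ring

lemma boundary_eqv (hef : IsEquilibrium F ef) {a : GArc} (ha : ArcF F a)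
    (hnb : ¬(cellA a ∈ F ∧ cellB a ∈ F)) :
    Relation.EqvGen (critRel F ef) a.1 a.2 :=
  Relation.EqvGen.rel _ _ ⟨[a.1, a.2, a.1], boundary_crit hef ha hnb, by simp, by simp⟩

end MFD
namespace MFD

variable {F : Finset Vtx} {ef : GArc → ℤ} {w0 : Vtx} {h h' : Vtx → ℤ} {c c' v v' : Vtx}

def ReachF (F : Finset Vtx) : Vtx → Vtx → Prop :=
  Relation.ReflTransGen (fun x y => ArcF F (x, y))

lemma arcF_pair_rev {x y : Vtx} (hxy : ArcF F (x, y)) : ArcF F (y, x) := arcF_arev hxy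

lemma reachF_symm : Symmetric (ReachF F) :=
  by
    intro x y hxy
    unfold ReachF at hxy ⊢
    induction hxy with
    | refl => exact Relation.ReflTransGen.refl
    | tail _ hbc ih => exact Relation.ReflTransGen.head (arcF_pair_rev hbc) ih

lemma side_bottom (hc : c ∈ F) : ArcF F ((c.1, c.2), (c.1 + 1, c.2)) := by
  refine ⟨by unfold IsArc; dsimp only; omega, Or.inl ?_⟩
  unfold cellA; dsimp only
  rw [if_pos rfl, min_eq_left (by omega), Prod.mk.eta]
  exact hc

lemma side_left (hc : c ∈ F) : ArcF F ((c.1, c.2), (c.1, c.2 + 1)) := by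
  refine ⟨by unfold IsArc; dsimp only; omega, Or.inl ?_⟩
  unfold cellA; dsimp only
  rw [if_neg (by omega), min_eq_left (by omega), Prod.mk.eta]
  exact hc

lemma side_right (hc : c ∈ F) : ArcF F ((c.1 + 1, c.2), (c.1 + 1, c.2 + 1)) := by
  refine ⟨by unfold IsArc; dsimp only; omega, Or.inr ?_⟩
  unfold cellB; dsimp only
  rw [if_neg (by omega), min_eq_left (by omega)]
  simpa using hc

lemma corner_cases (hcor : isCorner v c) :
    v = (c.1, c.2) ∨ v = (c.1 + 1, c.2) ∨ v = (c.1, c.2 + 1) ∨ v = (c.1 + 1, c.2 + 1) := by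
  obtain ⟨h1, h2⟩ := hcor
  rcases h1 with h1 | h1 <;> rcases h2 with h2 | h2 <;>
    simp [Prod.ext_iff, h1, h2]

lemma corner_reach_bl (hc : c ∈ F) (hv : isCorner v c) : ReachF F v (c.1, c.2) := by
  rcases corner_cases hv with rfl | rfl | rfl | rfl
  · exact Relation.ReflTransGen.refl
  · exact Relation.ReflTransGen.single (arcF_pair_rev (side_bottom hc))
  · exact Relation.ReflTransGen.single (arcF_pair_rev (side_left hc))
  · exact Relation.ReflTransGen.trans
      (Relation.ReflTransGen.single (arcF_pair_rev (side_right hc)))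
      (Relation.ReflTransGen.single (arcF_pair_rev (side_bottom hc)))

lemma adj4_reach (hc : c ∈ F) (hc' : c' ∈ F) (hadj : adj4 c c') :
    ReachF F (c.1, c.2) (c'.1, c'.2) := by
  have hcases : (c'.1 = c.1 + 1 ∧ c'.2 = c.2) ∨ (c'.1 = c.1 - 1 ∧ c'.2 = c.2) ∨
      (c'.1 = c.1 ∧ c'.2 = c.2 + 1) ∨ (c'.1 = c.1 ∧ c'.2 = c.2 - 1) := by
    unfold adj4 at hadj; omega
  rcases hcases with ⟨h1, h2⟩ | ⟨h1, h2⟩ | ⟨h1, h2⟩ | ⟨h1, h2⟩ <;> rw [h1, h2]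
  · exact Relation.ReflTransGen.single (side_bottom hc)
  · have := arcF_pair_rev (side_bottom hc')
    rw [h1, h2] at this
    simp only [sub_add_cancel] at this
    exact Relation.ReflTransGen.single this
  · exact Relation.ReflTransGen.single (side_left hc)
  · have := arcF_pair_rev (side_left hc')
    rw [h1, h2] at this
    simp only [sub_add_cancel] at this
    exact Relation.ReflTransGen.single this

lemma figure_reach (hF : IsFigure F) (hc : c ∈ F) (hc' : c' ∈ F) :
    ReachF F (c.1, c.2) (c'.1, c'.2) := by
  have hrt := hF.2.1 c hc c' hc'
  induction hrt with
  | refl => exact Relation.ReflTransGen.refl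
  | tail _ hbc ih =>
    exact Relation.ReflTransGen.trans (ih hbc.1) (adj4_reach hbc.1 hbc.2.1 hbc.2.2)

lemma VF_reach (hF : IsFigure F) (hv : v ∈ VF F) (hv' : v' ∈ VF F) : ReachF F v v' := by
  obtain ⟨c, hc, hcor⟩ := hv
  obtain ⟨c', hc', hcor'⟩ := hv'
  exact Relation.ReflTransGen.trans (corner_reach_bl hc hcor)
    (Relation.ReflTransGen.trans (figure_reach hF hc hc')
      (reachF_symm (corner_reach_bl hc' hcor')))

lemma reach_div4 (hh : InHF F ef w0 h) (hh' : InHF F ef w0 h') {x y : Vtx}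
    (hr : ReachF F x y) : (4 : ℤ) ∣ (h y - h' y) - (h x - h' x) := by
  induction hr with
  | refl => simp
  | tail _ hbc ih =>
    rename_i b cv _
    have d1 := hh.2 _ hbc
    have d2 := hh'.2 _ hbc
    have d3 := tArc_sub_bArc (F := F) (ef := ef) (b, cv)
    dsimp only at d1 d2
    rcases d1 with d1 | d1 <;> rcases d2 with d2 | d2 <;> omega

lemma diff_div4 (hF : IsFigure F) (hw0 : w0 ∈ VF F) (hh : InHF F ef w0 h)
    (hh' : InHF F ef w0 h') : ∀ v ∈ VF F, (4 : ℤ) ∣ (h v - h' v) := by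
  intro v hv
  have := reach_div4 hh hh' (VF_reach hF hw0 hv)
  rw [hh.1, hh'.1] at this
  simpa using this

end MFD
namespace MFD

variable {F : Finset Vtx} {ef : GArc → ℤ} {w0 : Vtx} {f g h h' : Vtx → ℤ}
variable {u v v' : Vtx} {S U : Set Vtx}

lemma eqv_equiv : Equivalence (Relation.EqvGen (critRel F ef)) :=
  Relation.EqvGen.is_equivalence _

lemma mem_fcomp_self (hv : v ∈ VF F) : v ∈ fcomp F ef v := ⟨hv, Relation.EqvGen.refl v⟩

lemma fcomp_subset_VF : fcomp F ef v ⊆ VF F := fun _ hx => hx.1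

lemma fcomp_eq_of_eqvgen (he : Relation.EqvGen (critRel F ef) v v') :
    fcomp F ef v = fcomp F ef v' := by
  ext x
  exact ⟨fun hx => ⟨hx.1, eqv_equiv.trans (eqv_equiv.symm he) hx.2⟩,
    fun hx => ⟨hx.1, eqv_equiv.trans he hx.2⟩⟩

lemma forced_nonempty (hS : IsForcedComponent F ef S) : S.Nonempty := by
  obtain ⟨x, hx, rfl⟩ := hS; exact ⟨x, mem_fcomp_self hx⟩

lemma forced_subset_VF (hS : IsForcedComponent F ef S) : S ⊆ VF F := by
  obtain ⟨x, _, rfl⟩ := hS; exact fcomp_subset_VF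

lemma forced_disjoint (hS : IsForcedComponent F ef S) (hU : IsForcedComponent F ef U)
    (hne : S ≠ U) (hx : u ∈ S) : u ∉ U := by
  obtain ⟨a, ha, rfl⟩ := hS
  obtain ⟨b, hb, rfl⟩ := hU
  intro hxU
  exact hne (fcomp_eq_of_eqvgen (eqv_equiv.trans hx.2 (eqv_equiv.symm hxU.2)))

lemma fcomp_eq_of_mem (hS : IsForcedComponent F ef S) (hx : u ∈ S) : S = fcomp F ef u := by
  obtain ⟨a, _, rfl⟩ := hS
  exact fcomp_eq_of_eqvgen hx.2

lemma VF_finite : (VF F).Finite := by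
  have : VF F ⊆ ⋃ c ∈ (F : Set Vtx), {v | isCorner v c} := by
    intro x ⟨c, hc, hcor⟩
    exact Set.mem_biUnion hc hcor
  refine Set.Finite.subset (Set.Finite.biUnion F.finite_toSet (fun c _ => ?_)) this
  refine Set.Finite.subset (s := {(c.1, c.2), (c.1 + 1, c.2), (c.1, c.2 + 1),
    (c.1 + 1, c.2 + 1)}) (Set.toFinite _) ?_
  intro x hx
  rcases corner_cases hx with rfl | rfl | rfl | rfl <;> simp

lemma comps_finite : {S : Set Vtx | IsForcedComponent F ef S}.Finite :=
  Set.Finite.subset VF_finite.finite_subsets (fun _ hS => forced_subset_VF hS)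

lemma mem_comps (hv : v ∈ VF F) : IsForcedComponent F ef (fcomp F ef v) := ⟨v, hv, rfl⟩

lemma flipUpAt_mem (hu : u ∈ U) : flipUpAt U g u = g u + 4 := by
  simp [flipUpAt, Set.indicator_of_mem hu]

lemma flipUpAt_not_mem (hu : u ∉ U) : flipUpAt U g u = g u := by
  simp [flipUpAt, Set.indicator_of_notMem hu]

lemma flipDownAt_mem (hu : u ∈ U) : flipDownAt U g u = g u - 4 := by
  simp [flipDownAt, Set.indicator_of_mem hu]

lemma flipDownAt_not_mem (hu : u ∉ U) : flipDownAt U g u = g u := by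
  simp [flipDownAt, Set.indicator_of_notMem hu]

lemma compDiff_congr (hfg : ∀ x ∈ S, f x = g x) : compDiff f h' S = compDiff g h' S := by
  unfold compDiff
  split_ifs with hne
  · rw [hfg _ hne.some_mem]
  · rfl

lemma compDiff_nonneg : 0 ≤ compDiff f h' S := by
  unfold compDiff; split_ifs
  · exact abs_nonneg _
  · exact le_refl 0

lemma compDiff_eq_abs (hcst : ∀ x ∈ S, ∀ y ∈ S, f x - h' x = f y - h' y) (hu : u ∈ S) :
    compDiff f h' S = |f u - h' u| := by
  unfold compDiff
  have hne : S.Nonempty := ⟨u, hu⟩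
  rw [dif_pos hne]
  rw [show f hne.some - h' hne.some = f u - h' u from hcst _ hne.some_mem u hu]

/-- `f - h'` is constant on a forced component, for `f, h' ∈ H_F` -/
lemma const_on_comp (hS : IsForcedComponent F ef S) (hf : InHF F ef w0 f)
    (hh' : InHF F ef w0 h') : ∀ x ∈ S, ∀ y ∈ S, f x - h' x = f y - h' y := by
  obtain ⟨a, _, rfl⟩ := hS
  intro x hx y hy
  rw [eqvgen_const hf hh' (eqv_equiv.symm hx.2), eqvgen_const hf hh' (eqv_equiv.symm hy.2)]

lemma delta_eq_sum : Delta F ef f h' =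
    ∑ S ∈ (comps_finite (F := F) (ef := ef)).toFinset, compDiff f h' S :=
  finsum_mem_eq_finite_toFinset_sum _ comps_finite

lemma delta_nonneg : 0 ≤ Delta F ef f h' := by
  rw [delta_eq_sum]
  exact Finset.sum_nonneg (fun _ _ => compDiff_nonneg)

lemma delta_eq_zero_of_eq (hfh : ∀ x ∈ VF F, f x = h' x) : Delta F ef f h' = 0 := by
  rw [delta_eq_sum]
  refine Finset.sum_eq_zero (fun S hS => ?_)
  rw [Set.Finite.mem_toFinset] at hS
  unfold compDiff
  split_ifs with hne
  · rw [hfh _ (forced_subset_VF hS hne.some_mem)]; simp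
  · rfl

lemma delta_congr_left (hfg : ∀ x ∈ VF F, f x = g x) : Delta F ef f h' = Delta F ef g h' := by
  rw [delta_eq_sum, delta_eq_sum]
  refine Finset.sum_congr rfl (fun S hS => ?_)
  rw [Set.Finite.mem_toFinset] at hS
  exact compDiff_congr (fun x hx => hfg x (forced_subset_VF hS hx))

lemma eq_of_delta_eq_zero (hf : InHF F ef w0 f) (hh' : InHF F ef w0 h')
    (hd : Delta F ef f h' = 0) : ∀ x ∈ VF F, f x = h' x := by
  intro x hx
  rw [delta_eq_sum] at hd
  have h0 : compDiff f h' (fcomp F ef x) = 0 := by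
    refine Finset.sum_eq_zero_iff_of_nonneg (fun _ _ => compDiff_nonneg) |>.1 hd _ ?_
    rw [Set.Finite.mem_toFinset]
    exact mem_comps hx
  rw [compDiff_eq_abs (const_on_comp (mem_comps hx) hf hh') (mem_fcomp_self hx)] at h0
  have := abs_eq_zero.1 h0
  omega

lemma delta_div4 (hF : IsFigure F) (hw0 : w0 ∈ VF F) (hf : InHF F ef w0 f)
    (hh' : InHF F ef w0 h') : (4 : ℤ) ∣ Delta F ef f h' := by
  rw [delta_eq_sum]
  refine Finset.dvd_sum (fun S hS => ?_)
  rw [Set.Finite.mem_toFinset] at hS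
  have hne := forced_nonempty hS
  unfold compDiff
  rw [dif_pos hne]
  have := diff_div4 hF hw0 hf hh' _ (forced_subset_VF hS hne.some_mem)
  exact (dvd_abs _ _).mpr this

/-- effect of an upward flip on `Delta` -/
lemma delta_flipUp (hU : IsForcedComponent F ef U) (hf : InHF F ef w0 f)
    (hh' : InHF F ef w0 h') (hu : u ∈ U) :
    Delta F ef (flipUpAt U f) h' = Delta F ef f h' + (|f u + 4 - h' u| - |f u - h' u|) := by
  rw [delta_eq_sum, delta_eq_sum]
  have hUm : U ∈ (comps_finite (F := F) (ef := ef)).toFinset := by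
    rw [Set.Finite.mem_toFinset]; exact hU
  rw [← Finset.sum_erase_add _ _ hUm, ← Finset.sum_erase_add _ _ hUm]
  have hother : ∀ S ∈ (comps_finite (F := F) (ef := ef)).toFinset.erase U,
      compDiff (flipUpAt U f) h' S = compDiff f h' S := by
    intro S hS
    have hSne := Finset.ne_of_mem_erase hS
    have hSm : IsForcedComponent F ef S := by
      have := Finset.mem_of_mem_erase hS
      rwa [Set.Finite.mem_toFinset] at this
    exact compDiff_congr (fun x hx =>
      flipUpAt_not_mem (forced_disjoint hSm hU hSne hx))
  rw [Finset.sum_congr rfl hother]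
  have hcst : ∀ x ∈ U, ∀ y ∈ U, flipUpAt U f x - h' x = flipUpAt U f y - h' y := by
    intro x hx y hy
    rw [flipUpAt_mem hx, flipUpAt_mem hy]
    have := const_on_comp hU hf hh' x hx y hy
    omega
  rw [compDiff_eq_abs hcst hu, flipUpAt_mem hu,
    compDiff_eq_abs (const_on_comp hU hf hh') hu]
  ring

/-- effect of a downward flip on `Delta` -/
lemma delta_flipDown (hU : IsForcedComponent F ef U) (hf : InHF F ef w0 f)
    (hh' : InHF F ef w0 h') (hu : u ∈ U) :
    Delta F ef (flipDownAt U f) h' = Delta F ef f h' + (|f u - 4 - h' u| - |f u - h' u|) := by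
  rw [delta_eq_sum, delta_eq_sum]
  have hUm : U ∈ (comps_finite (F := F) (ef := ef)).toFinset := by
    rw [Set.Finite.mem_toFinset]; exact hU
  rw [← Finset.sum_erase_add _ _ hUm, ← Finset.sum_erase_add _ _ hUm]
  have hother : ∀ S ∈ (comps_finite (F := F) (ef := ef)).toFinset.erase U,
      compDiff (flipDownAt U f) h' S = compDiff f h' S := by
    intro S hS
    have hSne := Finset.ne_of_mem_erase hS
    have hSm : IsForcedComponent F ef S := by
      have := Finset.mem_of_mem_erase hS
      rwa [Set.Finite.mem_toFinset] at this
    exact compDiff_congr (fun x hx =>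
      flipDownAt_not_mem (forced_disjoint hSm hU hSne hx))
  rw [Finset.sum_congr rfl hother]
  have hcst : ∀ x ∈ U, ∀ y ∈ U, flipDownAt U f x - h' x = flipDownAt U f y - h' y := by
    intro x hx y hy
    rw [flipDownAt_mem hx, flipDownAt_mem hy]
    have := const_on_comp hU hf hh' x hx y hy
    omega
  rw [compDiff_eq_abs hcst hu, flipDownAt_mem hu,
    compDiff_eq_abs (const_on_comp hU hf hh') hu]
  ring

end MFD
namespace MFD

variable {F : Finset Vtx} {ef : GArc → ℤ} {w0 : Vtx} {h : Vtx → ℤ} {x y v v' : Vtx}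

/-- arcs of `G_F` along which `h` takes the `t` increment -/
def TArcRel (F : Finset Vtx) (ef : GArc → ℤ) (h : Vtx → ℤ) (x y : Vtx) : Prop :=
  ArcF F (x, y) ∧ h y - h x = tArc F ef (x, y)

lemma head?_append_cons (A : List Vtx) (x : Vtx) (l : List Vtx) :
    (A ++ (x :: l)).head? = some (A.headD x) := by
  cases A <;> simp

/-- a closed walk made of `t`-arcs has all its vertices critically equivalent -/
lemma closed_twalk_eqv (hh : InHF F ef w0 h) : ∀ (n : ℕ) (L : List Vtx), L.length ≤ n →
    2 ≤ L.length → L.head? = L.getLast? → (∀ a ∈ arcsOf L, TArcRel F ef h a.1 a.2) →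
    ∀ x ∈ L, ∀ y ∈ L, Relation.EqvGen (critRel F ef) x y := by
  intro n
  induction n with
  | zero => intro L hn h2; omega
  | succ n ihn =>
    intro L hn h2 hcl harc x hx y hy
    by_cases hdup : L.dropLast.Nodup
    · -- `L` is an elementary cycle, and it is critical
      have helem : IsElemCycleF F L := ⟨⟨h2, hcl, fun a ha => (harc a ha).1⟩, hdup⟩
      have hcrit : CriticalCycle F ef L := by
        refine ⟨helem, ?_⟩
        show ((arcsOf L).map (tArc F ef)).sum = 0
        rw [List.map_congr_left (fun a ha => ((harc a ha).2).symm)]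
        exact sum_diff_closed h L hcl
      exact Relation.EqvGen.rel x y ⟨L, hcrit, hx, hy⟩
    · -- split at a repeated vertex
      have hLne : L ≠ [] := by intro hL; rw [hL] at h2; simp at h2
      obtain ⟨u, A, B, Cc, hsplit⟩ := exists_dup_split _ hdup
      set w := L.getLast hLne with hw
      have hL : L = A ++ (u :: (B ++ (u :: (Cc ++ [w])))) := by
        conv_lhs => rw [← List.dropLast_append_getLast hLne]
        rw [hsplit]
        simp [List.append_assoc]
        exact hw.symm
      have hwlast : L.getLast? = some w := List.getLast?_eq_getLast hLne
      have hhead : L.head? = some (A.headD u) := by rw [hL]; exact head?_append_cons _ _ _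
      have hAw : A.headD u = w := by
        rw [hhead, hwlast] at hcl; simpa using hcl
      -- the two subwalks
      set W₁ : List Vtx := u :: (B ++ [u]) with hW₁
      set W₂ : List Vtx := A ++ (u :: (Cc ++ [w])) with hW₂
      have harcdec : arcsOf L
          = arcsOf (A ++ [u]) ++ (arcsOf W₁ ++ arcsOf (u :: (Cc ++ [w]))) := by
        rw [hL, arcsOf_append A u (B ++ (u :: (Cc ++ [w])))]
        congr 1
        have e : (u :: (B ++ (u :: (Cc ++ [w]))) : List Vtx)
            = (u :: B) ++ (u :: (Cc ++ [w])) := by simp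
        rw [e, arcsOf_append (u :: B) u (Cc ++ [w])]
        rfl
      have harc2dec : arcsOf W₂ = arcsOf (A ++ [u]) ++ arcsOf (u :: (Cc ++ [w])) :=
        arcsOf_append A u (Cc ++ [w])
      have harc1 : ∀ a ∈ arcsOf W₁, TArcRel F ef h a.1 a.2 := by
        intro a ha; exact harc a (by rw [harcdec]; simp [ha])
      have harc2 : ∀ a ∈ arcsOf W₂, TArcRel F ef h a.1 a.2 := by
        intro a ha
        rw [harc2dec, List.mem_append] at ha
        rcases ha with ha | ha <;> exact harc a (by rw [harcdec]; simp [ha])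
      -- closedness of the subwalks
      have hcl1 : W₁.head? = W₁.getLast? := by
        rw [hW₁]
        rw [show (u :: (B ++ [u]) : List Vtx) = (u :: B) ++ [u] by simp]
        rw [List.getLast?_concat]; simp
      have hcl2 : W₂.head? = W₂.getLast? := by
        rw [hW₂, head?_append_cons, hAw]
        rw [show (A ++ (u :: (Cc ++ [w])) : List Vtx) = (A ++ (u :: Cc)) ++ [w] by simp]
        rw [List.getLast?_concat]
      -- lengths
      have hlenL : L.length = A.length + B.length + Cc.length + 3 := by
        rw [hL]; simp; omega
      have hlen1 : W₁.length = B.length + 2 := by rw [hW₁]; simp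
      have hlen2 : W₂.length = A.length + Cc.length + 2 := by rw [hW₂]; simp; omega
      -- inductive applications
      have key1 : ∀ z ∈ W₁, ∀ z' ∈ W₁, Relation.EqvGen (critRel F ef) z z' :=
        ihn W₁ (by omega) (by omega) hcl1 harc1
      have key2 : ∀ z ∈ W₂, ∀ z' ∈ W₂, Relation.EqvGen (critRel F ef) z z' :=
        ihn W₂ (by omega) (by omega) hcl2 harc2
      have hu1 : u ∈ W₁ := by rw [hW₁]; simp
      have hu2 : u ∈ W₂ := by rw [hW₂]; simp
      -- every vertex of `L` is equivalent to `u`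
      have hto_u : ∀ z ∈ L, Relation.EqvGen (critRel F ef) z u := by
        intro z hz
        have hz' : z ∈ W₁ ∨ z ∈ W₂ := by
          rw [hL] at hz
          rw [hW₁, hW₂]
          simp only [List.mem_append, List.mem_cons, List.mem_singleton,
            List.not_mem_nil, or_false] at hz ⊢
          tauto
        rcases hz' with hz' | hz'
        · exact key1 z hz' u hu1
        · exact key2 z hz' u hu2
      exact eqv_equiv.trans (hto_u x hx) (eqv_equiv.symm (hto_u y hy))

/-- turn a `ReflTransGen` path into a list -/
lemma rtg_to_list {r : Vtx → Vtx → Prop} (hr : Relation.ReflTransGen r x y) :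
    ∃ l : List Vtx, l.head? = some x ∧ l.getLast? = some y ∧
      ∀ a ∈ arcsOf l, r a.1 a.2 := by
  induction hr with
  | refl => exact ⟨[x], by simp, by simp, by simp [arcsOf_single]⟩
  | @tail b c hab hbc ih =>
    obtain ⟨l, hhead, hlast, harc⟩ := ih
    obtain ⟨l', rfl⟩ : ∃ l', l = l' ++ [b] := (List.getLast?_eq_some_iff).1 hlast
    refine ⟨(l' ++ [b]) ++ [c], ?_, ?_, ?_⟩
    · rw [← hhead]; cases l' <;> simp
    · rw [List.getLast?_concat]
    · intro a ha
      have e : ((l' ++ [b]) ++ [c] : List Vtx) = l' ++ (b :: [c]) := by simp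
      rw [e, arcsOf_append l' b [c]] at ha
      rw [List.mem_append] at ha
      rcases ha with ha | ha
      · exact harc a ha
      · have : a = (b, c) := by simpa [arcsOf_cons2, arcsOf_single] using ha
        rw [this]; exact hbc

/-- mutual `t`-reachability implies critical equivalence -/
lemma mutual_treach_eqv (hh : InHF F ef w0 h)
    (hxy : Relation.ReflTransGen (TArcRel F ef h) x y)
    (hyx : Relation.ReflTransGen (TArcRel F ef h) y x) :
    Relation.EqvGen (critRel F ef) x y := by
  obtain ⟨l₁, hh1, hl1, ha1⟩ := rtg_to_list hxy
  obtain ⟨l₂, hh2, hl2, ha2⟩ := rtg_to_list hyx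
  obtain ⟨l₁', rfl⟩ : ∃ l', l₁ = l' ++ [y] := (List.getLast?_eq_some_iff).1 hl1
  obtain ⟨t, rfl⟩ : ∃ t, l₂ = y :: t := by
    cases l₂ with
    | nil => simp at hh2
    | cons z t =>
      obtain rfl : z = y := by simpa using hh2
      exact ⟨t, rfl⟩
  set W : List Vtx := l₁' ++ (y :: t) with hWdef
  have hheadW : W.head? = some x := by
    rw [hWdef, head?_append_cons]
    rw [show (l₁' ++ [y] : List Vtx) = l₁' ++ ([y] : List Vtx) from rfl,
      head?_append_cons] at hh1
    simpa using hh1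
  have hlastW : W.getLast? = some x := by
    obtain ⟨p, hp⟩ : ∃ p, (y :: t : List Vtx) = p ++ [x] := (List.getLast?_eq_some_iff).1 hl2
    rw [hWdef, hp, show (l₁' ++ (p ++ [x]) : List Vtx) = (l₁' ++ p) ++ [x] by simp,
      List.getLast?_concat]
  have harcW : ∀ a ∈ arcsOf W, TArcRel F ef h a.1 a.2 := by
    intro a ha
    rw [hWdef, arcsOf_append l₁' y t, List.mem_append] at ha
    rcases ha with ha | ha
    · exact ha1 a ha
    · exact ha2 a ha
  have hxW : x ∈ W := by
    cases hW : W with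
    | nil => rw [hW] at hheadW; simp at hheadW
    | cons z W' =>
      rw [hW] at hheadW
      obtain rfl : z = x := by simpa using hheadW
      simp
  have hyW : y ∈ W := by rw [hWdef]; simp
  by_cases hlen : 2 ≤ W.length
  · exact closed_twalk_eqv hh W.length W (le_refl _) hlen (by rw [hheadW, hlastW]) harcW
      x hxW y hyW
  · -- degenerate: `W` is a single vertex, so `x = y`
    have h1 : W.length = 1 := by
      have : W ≠ [] := by
        intro hW; rw [hW] at hheadW; simp at hheadW
      have := List.length_pos_iff.2 this
      omega
    have hyx' : y = x := by
      cases hW : W with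
      | nil => rw [hW] at h1; simp at h1
      | cons z W' =>
        rw [hW] at h1 hheadW hyW
        simp only [List.length_cons] at h1
        obtain rfl : W' = [] := by
          cases W' with
          | nil => rfl
          | cons _ _ => simp at h1
        obtain rfl : z = x := by simpa using hheadW
        simpa using hyW
    subst hyx'
    exact Relation.EqvGen.refl y

/-- critical equivalence implies mutual `t`-reachability -/
lemma eqv_mutual (hh : InHF F ef w0 h) (he : Relation.EqvGen (critRel F ef) v v') :
    Relation.ReflTransGen (TArcRel F ef h) v v' ∧
      Relation.ReflTransGen (TArcRel F ef h) v' v := by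
  induction he with
  | rel a b hr =>
    obtain ⟨C, hC, ha, hb⟩ := hr
    have harc : ∀ c ∈ arcsOf C, TArcRel F ef h c.1 c.2 := by
      intro c hc
      have h1 := crit_forces hh hC c hc
      have h2 := hC.1.1.2.2 c hc
      exact ⟨by rwa [Prod.mk.eta], by rwa [Prod.mk.eta]⟩
    have hcl := hC.1.1.2.1
    exact ⟨reach_on_closed _ C hcl harc a ha b hb, reach_on_closed _ C hcl harc b hb a ha⟩
  | refl a => exact ⟨Relation.ReflTransGen.refl, Relation.ReflTransGen.refl⟩
  | symm a b _ ih => exact ⟨ih.2, ih.1⟩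
  | trans a b c _ _ ih1 ih2 =>
    exact ⟨Relation.ReflTransGen.trans ih1.1 ih2.1, Relation.ReflTransGen.trans ih2.2 ih1.2⟩

end MFD
namespace MFD

variable {F : Finset Vtx} {ef : GArc → ℤ} {w0 : Vtx} {h g : Vtx → ℤ}

/-- CORE: if `g` exceeds `h` somewhere, there is a forced component, avoiding
`w0`, on which `h` can be flipped up, decreasing `Δ(h,g)` by `4`. -/
lemma core (hF : IsFigure F) (hef : IsEquilibrium F ef) (hw0 : OnOuterBoundary F w0)
    (hh : InHF F ef w0 h) (hg : InHF F ef w0 g)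
    (hpos : ∃ v ∈ VF F, 0 < g v - h v) :
    ∃ U, IsForcedComponent F ef U ∧ w0 ∉ U ∧ InHF F ef w0 (flipUpAt U h) ∧
      (∀ u ∈ U, 4 ≤ g u - h u) ∧
      Delta F ef (flipUpAt U h) g = Delta F ef h g - 4 := by
  classical
  obtain ⟨v₀, hv₀, hv₀pos⟩ := hpos
  set Vfin := (VF_finite (F := F)).toFinset with hVfin
  have hmemVfin : ∀ z : Vtx, z ∈ Vfin ↔ z ∈ VF F := by
    intro z; rw [hVfin, Set.Finite.mem_toFinset]
  obtain ⟨m, hmf, hmax⟩ := Finset.exists_max_image Vfin (fun v => g v - h v)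
    ⟨v₀, (hmemVfin v₀).2 hv₀⟩
  have hmVF : m ∈ VF F := (hmemVfin m).1 hmf
  set M := g m - h m with hM
  have hMpos : 0 < M := lt_of_lt_of_le hv₀pos (hmax v₀ ((hmemVfin v₀).2 hv₀))
  have hMdvd : (4 : ℤ) ∣ M := diff_div4 hF hw0.1 hg hh m hmVF
  have hM4 : 4 ≤ M := by omega
  set R : Vtx → Finset Vtx := fun x => Vfin.filter
    (fun z => g z - h z = M ∧ Relation.ReflTransGen (TArcRel F ef h) z x) with hR
  set MxF : Finset Vtx := Vfin.filter (fun z => g z - h z = M) with hMxF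
  have hmMx : m ∈ MxF := by rw [hMxF, Finset.mem_filter]; exact ⟨hmf, rfl⟩
  obtain ⟨x₀, hx₀Mx, hx₀min⟩ := Finset.exists_min_image MxF (fun x => (R x).card) ⟨m, hmMx⟩
  rw [hMxF, Finset.mem_filter] at hx₀Mx
  have hx₀VF : x₀ ∈ VF F := (hmemVfin x₀).1 hx₀Mx.1
  have hx₀M : g x₀ - h x₀ = M := hx₀Mx.2
  set U := fcomp F ef x₀ with hU
  have hUcomp : IsForcedComponent F ef U := mem_comps hx₀VF
  have hUconst : ∀ u ∈ U, g u - h u = M := by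
    intro u hu
    have := eqvgen_const hg hh hu.2
    omega
  have hback : ∀ z x, TArcRel F ef h z x → z ∈ VF F ∧
      (g x - h x = M → g z - h z = M) := by
    intro z x ⟨harcF, hdt⟩
    have hzVF : z ∈ VF F := arcF_fst_mem_VF harcF
    refine ⟨hzVF, fun hxM => ?_⟩
    have hd2 := hg.2 _ harcF
    have hd3 := bArc_le_tArc (F := F) (ef := ef) (z, x)
    have hle : g z - h z ≤ M := hmax z ((hmemVfin z).2 hzVF)
    dsimp only at hd2 hdt
    rcases hd2 with hd2 | hd2 <;> omega
  have hkey : ∀ p q, ArcF F (p, q) → p ∈ U → q ∉ U → h q - h p = tArc F ef (p, q) := by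
    intro p q hpq hpU hqU
    by_contra hne
    have hdiff : h q - h p = bArc F ef (p, q) := by
      have := hh.2 _ hpq
      dsimp only at this
      rcases this with hd | hd
      · exact hd
      · exact absurd hd hne
    have hrev : TArcRel F ef h q p := by
      refine ⟨arcF_pair_rev hpq, ?_⟩
      have := (diff_bArc_iff hef hh hpq).1 (by dsimp only; exact hdiff)
      simpa [arev] using this
    have hpVF : p ∈ VF F := forced_subset_VF hUcomp hpU
    have hpM : g p - h p = M := hUconst p hpU
    obtain ⟨hqVF, hqM'⟩ := hback q p hrev
    have hqM : g q - h q = M := hqM' hpM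
    have hmut := eqv_mutual hh hpU.2
    have hq_x₀ : Relation.ReflTransGen (TArcRel F ef h) q x₀ :=
      Relation.ReflTransGen.trans (Relation.ReflTransGen.single hrev) hmut.2
    have hRsub : R q ⊆ R x₀ := by
      intro z hz
      rw [hR] at hz ⊢
      rw [Finset.mem_filter] at hz ⊢
      exact ⟨hz.1, hz.2.1, Relation.ReflTransGen.trans hz.2.2 hq_x₀⟩
    have hqMx : q ∈ MxF := by
      rw [hMxF, Finset.mem_filter]; exact ⟨(hmemVfin q).2 hqVF, hqM⟩
    have hReq : R q = R x₀ := Finset.eq_of_subset_of_card_le hRsub (hx₀min q hqMx)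
    have hx₀Rq : x₀ ∈ R q := by
      rw [hReq, hR, Finset.mem_filter]
      exact ⟨(hmemVfin x₀).2 hx₀VF, hx₀M, Relation.ReflTransGen.refl⟩
    have hx₀q : Relation.ReflTransGen (TArcRel F ef h) x₀ q := by
      rw [hR] at hx₀Rq
      exact (Finset.mem_filter.1 hx₀Rq).2.2
    exact hqU ⟨hqVF, mutual_treach_eqv hh hx₀q hq_x₀⟩
  have hw0U : w0 ∉ U := by
    intro hw0U
    have := hUconst w0 hw0U
    rw [hg.1, hh.1] at this
    omega
  have hflip : InHF F ef w0 (flipUpAt U h) := by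
    constructor
    · rw [flipUpAt_not_mem hw0U, hh.1]
    · intro a ha
      have hd := hh.2 a ha
      by_cases h1 : a.1 ∈ U <;> by_cases h2 : a.2 ∈ U
      · rw [flipUpAt_mem h2, flipUpAt_mem h1]
        omega
      · have hint : cellA a ∈ F ∧ cellB a ∈ F := by
          by_contra hnb
          exact h2 ⟨arcF_snd_mem_VF ha, eqv_equiv.trans h1.2 (boundary_eqv hef ha hnb)⟩
        have ht := hkey a.1 a.2 (by rwa [Prod.mk.eta]) h1 h2
        rw [Prod.mk.eta] at ht
        have e : tArc F ef a - bArc F ef a = 4 := by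
          unfold tArc bArc; rw [if_pos hint, if_pos hint]; ring
        rw [flipUpAt_mem h1, flipUpAt_not_mem h2]
        left; omega
      · have hint : cellA a ∈ F ∧ cellB a ∈ F := by
          by_contra hnb
          exact h1 ⟨arcF_fst_mem_VF ha,
            eqv_equiv.trans h2.2 (eqv_equiv.symm (boundary_eqv hef ha hnb))⟩
        have ht := hkey a.2 a.1 (arcF_pair_rev (by rwa [Prod.mk.eta])) h2 h1
        have e2 : tArc F ef (a.2, a.1) = - bArc F ef a := by
          have := tArc_arev hef (show ArcF F a from ha)
          exact this
        have e : tArc F ef a - bArc F ef a = 4 := by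
          unfold tArc bArc; rw [if_pos hint, if_pos hint]; ring
        rw [flipUpAt_not_mem h1, flipUpAt_mem h2]
        right; omega
      · rw [flipUpAt_not_mem h1, flipUpAt_not_mem h2]
        exact hd
  have hx₀U : x₀ ∈ U := mem_fcomp_self hx₀VF
  have hdelta : Delta F ef (flipUpAt U h) g = Delta F ef h g - 4 := by
    rw [delta_flipUp hUcomp hh hg hx₀U]
    have e1 : |h x₀ + 4 - g x₀| = M - 4 := by rw [abs_of_nonpos (by omega)]; omega
    have e2 : |h x₀ - g x₀| = M := by rw [abs_of_nonpos (by omega)]; omega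
    rw [e1, e2]; ring
  exact ⟨U, hUcomp, hw0U, hflip, fun u hu => by rw [hUconst u hu] at *; omega, hdelta⟩

end MFD
namespace MFD

variable {F : Finset Vtx} {ef : GArc → ℤ} {w0 : Vtx} {h g h' f0 : Vtx → ℤ}

lemma delta_comm (f g : Vtx → ℤ) : Delta F ef f g = Delta F ef g f := by
  rw [delta_eq_sum, delta_eq_sum]
  refine Finset.sum_congr rfl (fun S _ => ?_)
  unfold compDiff
  split_ifs
  · rw [abs_sub_comm]
  · rfl

lemma InHF_congr (hg : InHF F ef w0 g) (hw0 : w0 ∈ VF F)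
    (hgg : ∀ v ∈ VF F, g' v = g v) : InHF F ef w0 g' := by
  refine ⟨by rw [hgg w0 hw0, hg.1], fun a ha => ?_⟩
  rw [hgg a.1 (arcF_fst_mem_VF ha), hgg a.2 (arcF_snd_mem_VF ha)]
  exact hg.2 a ha

lemma abs_step (x : ℤ) : |x| - 4 ≤ |x + 4| ∧ |x| - 4 ≤ |x - 4| := by
  rcases abs_cases x with ⟨e1, _⟩ | ⟨e1, _⟩ <;>
    rcases abs_cases (x + 4) with ⟨e2, _⟩ | ⟨e2, _⟩ <;>
    rcases abs_cases (x - 4) with ⟨e3, _⟩ | ⟨e3, _⟩ <;> omega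

/-- one allowed flip decreases `Delta` to `h'` by at most 4 -/
lemma step_lower_bound (hh' : InHF F ef w0 h') {fi fi1 : Vtx → ℤ} {U : Set Vtx}
    (hU : IsForcedComponent F ef U) (hfi : InHF F ef w0 fi)
    (hor : fi1 = flipUpAt U fi ∨ fi1 = flipDownAt U fi) :
    Delta F ef fi h' - 4 ≤ Delta F ef fi1 h' := by
  have hu : (forced_nonempty hU).some ∈ U := (forced_nonempty hU).some_mem
  set u := (forced_nonempty hU).some
  rcases hor with rfl | rfl
  · rw [delta_flipUp hU hfi hh' hu]
    have := abs_step (fi u - h' u)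
    have e : fi u + 4 - h' u = (fi u - h' u) + 4 := by ring
    rw [e]
    omega
  · rw [delta_flipDown hU hfi hh' hu]
    have := abs_step (fi u - h' u)
    have e : fi u - 4 - h' u = (fi u - h' u) - 4 := by ring
    rw [e]
    omega

/-- the lower bound: any flip sequence from `f 0` to `h'` has length at least
`Delta / 4` -/
lemma flipseq_lower (hh' : InHF F ef w0 h') {f : ℕ → Vtx → ℤ} {s : ℕ → Set Vtx} :
    ∀ (n : ℕ), FlipSeq F ef w0 f s n → (∀ v ∈ VF F, f n v = h' v) →
    Delta F ef (f 0) h' ≤ 4 * n := by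
  have key : ∀ (j : ℕ) (n : ℕ), FlipSeq F ef w0 f s n → (∀ v ∈ VF F, f n v = h' v) →
      j ≤ n → Delta F ef (f (n - j)) h' ≤ 4 * j := by
    intro j
    induction j with
    | zero =>
      intro n hseq hend _
      simp only [Nat.sub_zero, Nat.cast_zero, mul_zero]
      rw [delta_eq_zero_of_eq hend]
    | succ j ih =>
      intro n hseq hend hj
      have hi : n - (j + 1) < n := by omega
      obtain ⟨hU, _, hfi, _, hor⟩ := hseq _ hi
      have hstep := step_lower_bound hh' hU hfi hor
      have hidx : n - (j + 1) + 1 = n - j := by omega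
      rw [hidx] at hstep
      have := ih n hseq hend (by omega)
      push_cast
      push_cast at this
      omega
  intro n hseq hend
  have := key n n hseq hend (le_refl n)
  simpa using this

/-- existence of a flip sequence of length `Delta / 4` -/
lemma flipseq_construct (hF : IsFigure F) (hef : IsEquilibrium F ef)
    (hw0 : OnOuterBoundary F w0) :
    ∀ (k : ℕ) (f0 h' : Vtx → ℤ), InHF F ef w0 f0 → InHF F ef w0 h' →
    Delta F ef f0 h' = 4 * k →
    ∃ (f : ℕ → Vtx → ℤ) (s : ℕ → Set Vtx), f 0 = f0 ∧ (∀ v ∈ VF F, f k v = h' v) ∧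
      FlipSeq F ef w0 f s k := by
  intro k
  induction k with
  | zero =>
    intro f0 h' hf0 hh' hd
    refine ⟨fun _ => f0, fun _ => ∅, rfl, ?_, fun i hi => by omega⟩
    exact eq_of_delta_eq_zero hf0 hh' (by simpa using hd)
  | succ k ih =>
    intro f0 h' hf0 hh' hd
    have hdpos : 0 < Delta F ef f0 h' := by rw [hd]; positivity
    have hne : ∃ v ∈ VF F, f0 v ≠ h' v := by
      by_contra hc
      push_neg at hc
      rw [delta_eq_zero_of_eq hc] at hdpos
      omega
    by_cases hup : ∃ v ∈ VF F, 0 < h' v - f0 v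
    · -- flip `f0` up
      obtain ⟨U, hUcomp, hw0U, hflip, _, hdelta⟩ := core hF hef hw0 hf0 hh' hup
      have hd' : Delta F ef (flipUpAt U f0) h' = 4 * k := by
        rw [hdelta, hd]; push_cast; ring
      obtain ⟨f', s', hf'0, hf'end, hf'seq⟩ := ih (flipUpAt U f0) h' hflip hh' hd'
      refine ⟨fun i => Nat.casesOn i f0 f', fun i => Nat.casesOn i U s', rfl, ?_, ?_⟩
      · intro v hv; exact hf'end v hv
      · intro i hi
        cases i with
        | zero =>
          refine ⟨hUcomp, ?_, hf0, ?_, Or.inl ?_⟩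
          · intro hUeq
            have hUeq' : U = fcomp F ef w0 := hUeq
            exact hw0U (hUeq' ▸ mem_fcomp_self hw0.1)
          · show InHF F ef w0 (f' 0)
            rw [hf'0]; exact hflip
          · show f' 0 = flipUpAt U f0
            exact hf'0
        | succ j => exact hf'seq j (by omega)
    · -- flip `h'` up, and append the reversed flip
      push_neg at hup
      have hdown : ∃ v ∈ VF F, 0 < f0 v - h' v := by
        obtain ⟨v, hv, hvne⟩ := hne
        exact ⟨v, hv, by have := hup v hv; omega⟩
      obtain ⟨U, hUcomp, hw0U, hflip, _, hdelta⟩ := core hF hef hw0 hh' hf0 hdown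
      have hd' : Delta F ef f0 (flipUpAt U h') = 4 * k := by
        rw [delta_comm, hdelta, delta_comm, hd]; push_cast; ring
      obtain ⟨f', s', hf'0, hf'end, hf'seq⟩ := ih f0 (flipUpAt U h') hf0 hflip hd'
      refine ⟨fun i => if i ≤ k then f' i else flipDownAt U (f' k),
        fun i => if i < k then s' i else U, ?_, ?_, ?_⟩
      · simp [hf'0]
      · intro v hv
        show (if k + 1 ≤ k then f' (k + 1) else flipDownAt U (f' k)) v = h' v
        rw [if_neg (by omega)]
        by_cases hvU : v ∈ U
        · rw [flipDownAt_mem hvU, hf'end v hv, flipUpAt_mem hvU]; ring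
        · rw [flipDownAt_not_mem hvU, hf'end v hv, flipUpAt_not_mem hvU]
      · intro i hi
        dsimp only
        by_cases hik : i < k
        · obtain ⟨hc1, hc2, hc3, hc4, hc5⟩ := hf'seq i hik
          rw [if_pos hik]
          refine ⟨hc1, hc2, ?_, ?_, ?_⟩
          · rwa [if_pos (by omega)]
          · by_cases hik1 : i + 1 ≤ k
            · rwa [if_pos hik1]
            · omega
          · rw [if_pos (by omega), if_pos (by omega)]
            exact hc5
        · have hik' : i = k := by omega
          subst hik'
          rw [if_neg (by omega)]
          have hfk : InHF F ef w0 (f' i) := by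
            refine InHF_congr hflip hw0.1 (fun v hv => hf'end v hv)
          refine ⟨hUcomp, ?_, ?_, ?_, Or.inr ?_⟩
          · intro hUeq
            have hUeq' : U = fcomp F ef w0 := hUeq
            exact hw0U (hUeq' ▸ mem_fcomp_self hw0.1)
          · rwa [if_pos (le_refl i)]
          · rw [if_neg (by omega)]
            refine InHF_congr hh' hw0.1 (fun v hv => ?_)
            by_cases hvU : v ∈ U
            · rw [flipDownAt_mem hvU, hf'end v hv, flipUpAt_mem hvU]; ring
            · rw [flipDownAt_not_mem hvU, hf'end v hv, flipUpAt_not_mem hvU]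
          · rw [if_neg (by omega), if_pos (le_refl i)]

end MFD
open MFD in
/-- the minimal number of allowed flips needed to pass from `h`
to `h'` is `Δ(h,h')/4`, and in any minimal sequence the flipped forced
components are exactly those on which `h` and `h'` differ. -/
theorem min_flip_distance (F : Finset Vtx) (hF : IsFigure F)
    (ef : GArc → ℤ) (hef : IsEquilibrium F ef)
    (w0 : Vtx) (hw0 : OnOuterBoundary F w0)
    (h h' : Vtx → ℤ) (hh : InHF F ef w0 h) (hh' : InHF F ef w0 h') :
    ∃ n₀ : ℕ, 4 * (n₀ : ℤ) = Delta F ef h h' ∧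
      IsLeast {n : ℕ | ∃ (f : ℕ → Vtx → ℤ) (s : ℕ → Set Vtx),
        f 0 = h ∧ (∀ v ∈ VF F, f n v = h' v) ∧ FlipSeq F ef w0 f s n} n₀ ∧
      (∀ (f : ℕ → Vtx → ℤ) (s : ℕ → Set Vtx),
        f 0 = h → (∀ v ∈ VF F, f n₀ v = h' v) → FlipSeq F ef w0 f s n₀ →
        ∀ S : Set Vtx, (∃ i < n₀, s i = S) ↔
          (IsForcedComponent F ef S ∧ ∃ v ∈ S, h v ≠ h' v)) := by
  classical
  have hw0VF : w0 ∈ VF F := hw0.1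
  have hdvd : (4 : ℤ) ∣ Delta F ef h h' := delta_div4 hF hw0VF hh hh'
  have hnn : (0 : ℤ) ≤ Delta F ef h h' := delta_nonneg
  obtain ⟨c, hc⟩ := hdvd
  have hc0 : 0 ≤ c := by omega
  have hct : ((c.toNat : ℤ)) = c := Int.toNat_of_nonneg hc0
  refine ⟨c.toNat, by omega, ⟨?_, ?_⟩, ?_⟩
  · -- membership: a sequence of length `c.toNat` exists
    obtain ⟨f, s, h0, hend, hseq⟩ := flipseq_construct hF hef hw0 c.toNat h h' hh hh'
      (by omega)
    exact ⟨f, s, h0, hend, hseq⟩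
  · -- lower bound
    rintro n ⟨f, s, h0, hend, hseq⟩
    have := flipseq_lower hh' n hseq hend
    rw [h0] at this
    omega
  · -- characterization of the flipped components in a minimal sequence
    intro f s h0 hend hseq S
    set n₀ := c.toNat with hn₀
    -- Delta along the sequence: upper bounds via tails
    have htail : ∀ i ≤ n₀, Delta F ef (f i) h' ≤ 4 * ((n₀ - i : ℕ) : ℤ) := by
      intro i hi
      have hseq' : FlipSeq F ef w0 (fun j => f (i + j)) (fun j => s (i + j)) (n₀ - i) := by
        intro j hj
        exact hseq (i + j) (by omega)
      have hend' : ∀ v ∈ VF F, (fun j => f (i + j)) (n₀ - i) v = h' v := by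
        intro v hv
        have e : i + (n₀ - i) = n₀ := by omega
        simpa [e] using hend v hv
      have := flipseq_lower hh' (n₀ - i) hseq' hend'
      simpa using this
    have hforward : ∀ i, i ≤ n₀ → 4 * ((n₀ - i : ℕ) : ℤ) ≤ Delta F ef (f i) h' := by
      intro i
      induction i with
      | zero =>
        intro _
        rw [h0]
        have : Delta F ef h h' = 4 * c := hc
        push_cast
        omega
      | succ i ih =>
        intro hi
        obtain ⟨hU, _, hfi, _, hor⟩ := hseq i (by omega)
        have hstep := step_lower_bound hh' hU hfi hor
        have := ih (by omega)
        push_cast at *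
        omega
    have hdel : ∀ i ≤ n₀, Delta F ef (f i) h' = 4 * ((n₀ - i : ℕ) : ℤ) :=
      fun i hi => le_antisymm (htail i hi) (hforward i hi)
    -- every flip in the sequence is on a component where the current function differs
    have hstep4 : ∀ i < n₀, ∀ u ∈ s i, 4 ≤ |f i u - h' u| := by
      intro i hi u hu
      obtain ⟨hU, _, hfi, _, hor⟩ := hseq i hi
      have e1 := hdel i (by omega)
      have e2 := hdel (i + 1) (by omega)
      rcases hor with hor | hor
      · rw [hor, delta_flipUp hU hfi hh' hu] at e2
        rcases abs_cases (f i u + 4 - h' u) with ⟨a1, a2⟩ | ⟨a1, a2⟩ <;>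
          rcases abs_cases (f i u - h' u) with ⟨b1, b2⟩ | ⟨b1, b2⟩ <;>
          push_cast at e1 e2 <;> omega
      · rw [hor, delta_flipDown hU hfi hh' hu] at e2
        rcases abs_cases (f i u - 4 - h' u) with ⟨a1, a2⟩ | ⟨a1, a2⟩ <;>
          rcases abs_cases (f i u - h' u) with ⟨b1, b2⟩ | ⟨b1, b2⟩ <;>
          push_cast at e1 e2 <;> omega
    constructor
    · rintro ⟨i, hi, rfl⟩
      have hScomp : IsForcedComponent F ef (s i) := (hseq i hi).1
      refine ⟨hScomp, ?_⟩
      by_contra hno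
      push_neg at hno
      have hinv : ∀ j, j ≤ n₀ → ∀ v ∈ s i, f j v = h v := by
        intro j
        induction j with
        | zero => intro _ v hv; rw [h0]
        | succ j ihj =>
          intro hj v hv
          obtain ⟨hUj, _, hfj, _, horj⟩ := hseq j (by omega)
          by_cases hsj : v ∈ s j
          · exfalso
            have h4 := hstep4 j (by omega) v hsj
            rw [ihj (by omega) v hv, hno v hv] at h4
            simp at h4
          · rcases horj with he | he <;> rw [he]
            · rw [flipUpAt_not_mem hsj, ihj (by omega) v hv]
            · rw [flipDownAt_not_mem hsj, ihj (by omega) v hv]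
      obtain ⟨u, hu⟩ := forced_nonempty hScomp
      have h4 := hstep4 i hi u hu
      rw [hinv i (by omega) u hu, hno u hu] at h4
      simp at h4
    · rintro ⟨hScomp, v, hv, hvne⟩
      have hvVF : v ∈ VF F := forced_subset_VF hScomp hv
      have hchange : ∃ i < n₀, f i v ≠ f (i + 1) v := by
        by_contra hc2
        push_neg at hc2
        have hconst : ∀ i, i ≤ n₀ → f i v = h v := by
          intro i
          induction i with
          | zero => intro _; rw [h0]
          | succ i ihi => intro hi1; rw [← hc2 i (by omega), ihi (by omega)]
        exact hvne (by rw [← hconst n₀ (le_refl _), hend v hvVF])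
      obtain ⟨i, hi, hne2⟩ := hchange
      obtain ⟨hUi, _, _, _, hori⟩ := hseq i hi
      have hvsi : v ∈ s i := by
        by_contra hvn
        rcases hori with he | he <;> rw [he] at hne2
        · exact hne2 (flipUpAt_not_mem hvn).symm
        · exact hne2 (flipDownAt_not_mem hvn).symm
      refine ⟨i, hi, ?_⟩
      rw [fcomp_eq_of_mem hUi hvsi, ← fcomp_eq_of_mem hScomp hv]
end

section
/- Let F be a tileable figure with equilibrium function eq and base vertex w₀, let h∈H_F, and let T be the tiling of F with h_T=h. Then h is a maximal element of (H_F,≤) if and only if for every forced component U of F there is a directed path in G_T from a vertex of U_∞ to a vertex of U; and h is a minimal element of (H_F,≤) if and only if for every forced component U there is a directed path in G_T from a vertex of U to a vertex of U_∞. -/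
open Classical

section AuxLemmas

variable {F : Finset Vtx} {ef : GArc → ℤ} {D : Set GArc} {w0 : Vtx}

lemma isArc_arev {a : GArc} (h : IsArc a) : IsArc (arev a) := by
  simp only [IsArc, arev] at *; omega

lemma arev_arev (a : GArc) : arev (arev a) = a := rfl

lemma colorSign_arev {a : GArc} (h : IsArc a) : colorSign a.2 = -colorSign a.1 := by
  obtain ⟨⟨x1, y1⟩, x2, y2⟩ := a
  simp only [IsArc] at h
  simp only [colorSign]
  split_ifs with h1 h2 h2 <;> omega

lemma sp_arev {a : GArc} (h : IsArc a) : sp (arev a) = -sp a := by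
  have hc := colorSign_arev h
  obtain ⟨⟨x1, y1⟩, x2, y2⟩ := a
  simp only [sp, arev] at *
  rw [hc]; ring

lemma sp_pm {a : GArc} (h : IsArc a) : sp a = 1 ∨ sp a = -1 := by
  obtain ⟨⟨x1, y1⟩, x2, y2⟩ := a
  simp only [IsArc] at h
  have h2 : (x2 - x1 = 0 ∧ (y2 - y1 = 1 ∨ y2 - y1 = -1)) ∨
      ((x2 - x1 = 1 ∨ x2 - x1 = -1) ∧ y2 - y1 = 0) := by omega
  simp only [sp, colorSign]
  rcases h2 with ⟨h3, h4 | h4⟩ | ⟨h3 | h3, h4⟩ <;> rw [h3, h4] <;> split_ifs <;> norm_num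

lemma cellA_arev {a : GArc} (h : IsArc a) : cellA (arev a) = cellA a := by
  obtain ⟨⟨x1, y1⟩, x2, y2⟩ := a
  simp only [IsArc] at h
  simp only [cellA, arev]
  split_ifs with h1 h2 h2
  · simp [min_comm, h1]
  · have : x2 = x1 := by omega
    simp [min_comm, this, h1, Ne.symm h1]

lemma cellB_arev {a : GArc} (h : IsArc a) : cellB (arev a) = cellB a := by
  obtain ⟨⟨x1, y1⟩, x2, y2⟩ := a
  simp only [IsArc] at h
  simp only [cellB, arev]
  split_ifs with h1 h2 h2
  · simp [min_comm, h1]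
  · have : x2 = x1 := by omega
    simp [min_comm, this, h1, Ne.symm h1]

lemma arcF_arev {a : GArc} (h : ArcF F a) : ArcF F (arev a) :=
  ⟨isArc_arev h.1, by rw [cellA_arev h.1, cellB_arev h.1]; exact h.2⟩

lemma chi_arev (hsym : ∀ a ∈ D, arev a ∈ D) (a : GArc) : chi D (arev a) = chi D a := by
  unfold chi
  split_ifs with h1 h2 h2
  · rfl
  · exact absurd (by have := hsym _ h1; rwa [arev_arev] at this) h2
  · exact absurd (hsym _ h2) h1
  · rfl

lemma gT_arev (hsk : IsSkewOnF F ef) (hsym : ∀ a ∈ D, arev a ∈ D) {a : GArc}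
    (ha : ArcF F a) : gT ef D (arev a) = -gT ef D a := by
  unfold gT
  rw [hsk a ha, sp_arev ha.1, chi_arev hsym]; ring

lemma bArc_arev (hsk : IsSkewOnF F ef) {a : GArc} (ha : ArcF F a) :
    bArc F ef (arev a) = -tArc F ef a := by
  unfold bArc tArc
  rw [cellA_arev ha.1, cellB_arev ha.1, hsk a ha, sp_arev ha.1]
  split_ifs <;> ring

lemma bArc_le_tArc (F : Finset Vtx) (ef : GArc → ℤ) (a : GArc) :
    bArc F ef a ≤ tArc F ef a := by
  unfold bArc tArc; split_ifs <;> omega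

lemma not_int_bt {a : GArc} (h : ¬(cellA a ∈ F ∧ cellB a ∈ F)) :
    bArc F ef a = tArc F ef a := by simp [bArc, tArc, h]

lemma int_t_eq {a : GArc} (h : cellA a ∈ F ∧ cellB a ∈ F) :
    tArc F ef a = bArc F ef a + 4 := by simp [bArc, tArc, h]; ring

lemma gT_mem (hD : IsTiling F D) {a : GArc} (ha : ArcF F a) :
    gT ef D a = bArc F ef a ∨ gT ef D a = tArc F ef a := by
  by_cases hint : cellA a ∈ F ∧ cellB a ∈ F
  · by_cases hd : a ∈ D <;> rcases sp_pm ha.1 with hs | hs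
    · left; simp only [gT, tArc, bArc, chi, if_pos hint, if_pos hd]; rw [hs]; ring1
    · right; simp only [gT, tArc, bArc, chi, if_pos hint, if_pos hd]; rw [hs]; ring1
    · right; simp only [gT, tArc, bArc, chi, if_pos hint, if_neg hd]; rw [hs]; ring1
    · left; simp only [gT, tArc, bArc, chi, if_pos hint, if_neg hd]; rw [hs]; ring1
  · have hnd : a ∉ D := fun hd => hint ⟨(hD.2.1 a hd).2.1, (hD.2.1 a hd).2.2⟩
    right
    simp only [gT, tArc, chi, hint, if_neg, hnd, if_false]
    ring

lemma height_inHF (hD : IsTiling F D) {h : Vtx → ℤ} (hh : IsHeightOf F ef D w0 h) :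
    InHF F ef w0 h :=
  ⟨hh.1, fun a ha => by rw [hh.2 a ha]; exact gT_mem hD ha⟩

lemma sumOn_diff_cons (g : Vtx → ℤ) : ∀ (C : List Vtx) (v : Vtx),
    sumOn (fun a => g a.2 - g a.1) (v :: C)
      = g ((v :: C).getLast (List.cons_ne_nil v C)) - g v := by
  intro C
  induction C with
  | nil => intro v; simp [sumOn, arcsOf]
  | cons w C ih =>
    intro v
    have h1 : arcsOf (v :: w :: C) = (v, w) :: arcsOf (w :: C) := rfl
    rw [List.getLast_cons (List.cons_ne_nil w C)]
    simp only [sumOn, h1, List.map_cons, List.sum_cons]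
    have h2 := ih w
    simp only [sumOn] at h2
    rw [h2]; ring

lemma sumOn_diff_zero (g : Vtx → ℤ) (C : List Vtx) (hC : C.head? = C.getLast?) :
    sumOn (fun a => g a.2 - g a.1) C = 0 := by
  cases C with
  | nil => simp [sumOn, arcsOf]
  | cons v C' =>
    rw [sumOn_diff_cons]
    rw [List.head?_cons, List.getLast?_eq_getLast (List.cons_ne_nil v C')] at hC
    rw [← Option.some_inj.mp hC]
    ring

lemma chain_const (d : Vtx → ℤ) : ∀ (C : List Vtx) (x : Vtx),
    (∀ a ∈ arcsOf (x :: C), d a.1 = d a.2) → ∀ v ∈ x :: C, d v = d x := by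
  intro C
  induction C with
  | nil => intro x _ v hv; simp at hv; rw [hv]
  | cons y C ih =>
    intro x hx v hv
    have harcs : arcsOf (x :: y :: C) = (x, y) :: arcsOf (y :: C) := rfl
    rcases List.mem_cons.mp hv with rfl | hv
    · rfl
    · have h1 : ∀ a ∈ arcsOf (y :: C), d a.1 = d a.2 := fun a ha =>
        hx a (by rw [harcs]; exact List.mem_cons_of_mem _ ha)
      have h2 := ih y h1 v hv
      have h3 : d x = d y := hx (x, y) (by rw [harcs]; exact List.mem_cons_self)
      rw [h2, ← h3]

lemma crit_tight {g : Vtx → ℤ} (hg : InHF F ef w0 g) {C : List Vtx}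
    (hC : CriticalCycle F ef C) :
    ∀ a ∈ arcsOf C, g a.2 - g a.1 = tArc F ef a := by
  obtain ⟨⟨⟨hlen, hhl, harc⟩, _⟩, ht⟩ := hC
  have hdiff : sumOn (fun a => g a.2 - g a.1) C = 0 := sumOn_diff_zero g C hhl
  have hsub : ∀ (l : List GArc) (f g' : GArc → ℤ),
      (l.map (fun a => f a - g' a)).sum = (l.map f).sum - (l.map g').sum := by
    intro l f g'
    induction l with
    | nil => simp
    | cons a l ih => simp [ih]; ring
  have hsum : ((arcsOf C).map (fun a => tArc F ef a - (g a.2 - g a.1))).sum = 0 := by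
    rw [hsub]
    simp only [sumOn] at ht hdiff
    rw [ht, hdiff]
    ring
  intro a ha
  have hnn : ∀ x ∈ (arcsOf C).map (fun a => tArc F ef a - (g a.2 - g a.1)), 0 ≤ x := by
    intro x hx
    obtain ⟨b, hb, rfl⟩ := List.mem_map.mp hx
    rcases hg.2 b (harc b hb) with h | h
    · have := bArc_le_tArc F ef b; omega
    · omega
  have hle := List.single_le_sum hnn _ (List.mem_map_of_mem ha)
  have h0 := hnn _ (List.mem_map_of_mem ha)
  rw [hsum] at hle
  omega

lemma eqv_const {h h' : Vtx → ℤ} (hh : InHF F ef w0 h) (hh' : InHF F ef w0 h')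
    {v v' : Vtx} (he : Relation.EqvGen (critRel F ef) v v') :
    h' v - h v = h' v' - h v' := by
  induction he with
  | rel x y hxy =>
    obtain ⟨C, hC, hx, hy⟩ := hxy
    have t1 := crit_tight hh hC
    have t2 := crit_tight hh' hC
    have hcons : ∀ a ∈ arcsOf C, (fun w => h' w - h w) a.1 = (fun w => h' w - h w) a.2 := by
      intro a ha
      have e1 := t1 a ha
      have e2 := t2 a ha
      simp only
      omega
    have hlen := hC.1.1.1
    cases C with
    | nil => simp at hlen
    | cons z C' =>
      have e1 := chain_const (fun w => h' w - h w) C' z hcons x hx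
      have e2 := chain_const (fun w => h' w - h w) C' z hcons y hy
      omega
  | refl x => rfl
  | symm x y _ ih => omega
  | trans x y z _ _ ih1 ih2 => omega

lemma reach_le {h h' : Vtx → ℤ} (hh : IsHeightOf F ef D w0 h) (hh' : InHF F ef w0 h')
    {u v : Vtx} (hr : GTReach F ef D u v) : h' v - h v ≤ h' u - h u := by
  induction hr with
  | refl => exact le_refl _
  | @tail b c _ hstep ih =>
    obtain ⟨harc, hgt⟩ := hstep
    have h1 : h c - h b = tArc F ef (b, c) := by
      have := hh.2 _ harc
      simp only at this
      rw [this]; exact hgt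
    rcases hh'.2 _ harc with h2 | h2 <;> simp only at h2
    · have := bArc_le_tArc F ef (b, c); omega
    · omega

lemma mem_fcomp_self {v : Vtx} (hv : v ∈ VF F) : v ∈ fcomp F ef v :=
  ⟨hv, Relation.EqvGen.refl v⟩

lemma flip_up (hef : IsEquilibrium F ef) (hD : IsTiling F D) {h : Vtx → ℤ}
    (hh : IsHeightOf F ef D w0 h) (hw0 : w0 ∈ VF F) :
    InHF F ef w0 (fun v => h v + (if ∃ u ∈ fcomp F ef w0, GTReach F ef D u v then 0 else 4)) := by
  constructor
  · have hR : ∃ u ∈ fcomp F ef w0, GTReach F ef D u w0 :=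
      ⟨w0, mem_fcomp_self hw0, Relation.ReflTransGen.refl⟩
    simp only [if_pos hR, hh.1]
    ring
  · intro a ha
    have hH := height_inHF hD hh
    by_cases hrx : ∃ u ∈ fcomp F ef w0, GTReach F ef D u a.1 <;>
      by_cases hry : ∃ u ∈ fcomp F ef w0, GTReach F ef D u a.2
    · simp only [if_pos hrx, if_pos hry]
      have := hH.2 a ha
      omega
    · -- a.1 reachable, a.2 not: gT a = bArc, interior
      have hne : gT ef D a ≠ tArc F ef a := by
        intro heq
        obtain ⟨u, hu, hr⟩ := hrx
        exact hry ⟨u, hu, hr.tail ⟨ha, heq⟩⟩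
      have hb : gT ef D a = bArc F ef a := (gT_mem hD ha).resolve_right hne
      have hint : cellA a ∈ F ∧ cellB a ∈ F := by
        by_contra hc
        exact hne (hb.trans (not_int_bt hc))
      have hdiff : h a.2 - h a.1 = bArc F ef a := by rw [hh.2 a ha]; exact hb
      have ht4 := int_t_eq (ef := ef) hint
      simp only [if_pos hrx, if_neg hry]
      omega
    · -- a.1 not reachable, a.2 reachable: gT a = tArc, interior
      have hne : gT ef D (arev a) ≠ tArc F ef (arev a) := by
        intro heq
        obtain ⟨u, hu, hr⟩ := hry
        exact hrx ⟨u, hu, hr.tail ⟨arcF_arev ha, heq⟩⟩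
      have hb : gT ef D (arev a) = bArc F ef (arev a) :=
        (gT_mem hD (arcF_arev ha)).resolve_right hne
      have hintr : cellA (arev a) ∈ F ∧ cellB (arev a) ∈ F := by
        by_contra hc
        exact hne (hb.trans (not_int_bt hc))
      have hint : cellA a ∈ F ∧ cellB a ∈ F := by
        rwa [cellA_arev ha.1, cellB_arev ha.1] at hintr
      have hgt : gT ef D a = tArc F ef a := by
        have e1 := gT_arev hef.1 hD.1 ha
        have e2 := bArc_arev hef.1 ha
        rw [hb, e2] at e1
        omega
      have hdiff : h a.2 - h a.1 = tArc F ef a := by rw [hh.2 a ha]; exact hgt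
      have ht4 := int_t_eq (ef := ef) hint
      simp only [if_neg hrx, if_pos hry]
      omega
    · simp only [if_neg hrx, if_neg hry]
      have := hH.2 a ha
      omega

lemma flip_down (hef : IsEquilibrium F ef) (hD : IsTiling F D) {h : Vtx → ℤ}
    (hh : IsHeightOf F ef D w0 h) (hw0 : w0 ∈ VF F) :
    InHF F ef w0 (fun v => h v - (if ∃ u ∈ fcomp F ef w0, GTReach F ef D v u then 0 else 4)) := by
  constructor
  · have hR : ∃ u ∈ fcomp F ef w0, GTReach F ef D w0 u :=
      ⟨w0, mem_fcomp_self hw0, Relation.ReflTransGen.refl⟩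
    simp only [if_pos hR, hh.1]
    ring
  · intro a ha
    have hH := height_inHF hD hh
    by_cases hrx : ∃ u ∈ fcomp F ef w0, GTReach F ef D a.1 u <;>
      by_cases hry : ∃ u ∈ fcomp F ef w0, GTReach F ef D a.2 u
    · simp only [if_pos hrx, if_pos hry]
      have := hH.2 a ha
      omega
    · -- a.1 reaches, a.2 doesn't: gT (arev a) ≠ t, so gT a = t, interior
      have hne : gT ef D (arev a) ≠ tArc F ef (arev a) := by
        intro heq
        obtain ⟨u, hu, hr⟩ := hrx
        exact hry ⟨u, hu, Relation.ReflTransGen.head ⟨arcF_arev ha, heq⟩ hr⟩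
      have hb : gT ef D (arev a) = bArc F ef (arev a) :=
        (gT_mem hD (arcF_arev ha)).resolve_right hne
      have hintr : cellA (arev a) ∈ F ∧ cellB (arev a) ∈ F := by
        by_contra hc
        exact hne (hb.trans (not_int_bt hc))
      have hint : cellA a ∈ F ∧ cellB a ∈ F := by
        rwa [cellA_arev ha.1, cellB_arev ha.1] at hintr
      have hgt : gT ef D a = tArc F ef a := by
        have e1 := gT_arev hef.1 hD.1 ha
        have e2 := bArc_arev hef.1 ha
        rw [hb, e2] at e1
        omega
      have hdiff : h a.2 - h a.1 = tArc F ef a := by rw [hh.2 a ha]; exact hgt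
      have ht4 := int_t_eq (ef := ef) hint
      simp only [if_pos hrx, if_neg hry]
      omega
    · -- a.2 reaches, a.1 doesn't: gT a = bArc, interior
      have hne : gT ef D a ≠ tArc F ef a := by
        intro heq
        obtain ⟨u, hu, hr⟩ := hry
        exact hrx ⟨u, hu, Relation.ReflTransGen.head ⟨ha, heq⟩ hr⟩
      have hb : gT ef D a = bArc F ef a := (gT_mem hD ha).resolve_right hne
      have hint : cellA a ∈ F ∧ cellB a ∈ F := by
        by_contra hc
        exact hne (hb.trans (not_int_bt hc))
      have hdiff : h a.2 - h a.1 = bArc F ef a := by rw [hh.2 a ha]; exact hb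
      have ht4 := int_t_eq (ef := ef) hint
      simp only [if_neg hrx, if_pos hry]
      omega
    · simp only [if_neg hrx, if_neg hry]
      have := hH.2 a ha
      omega

end AuxLemmas

/-- `h_T` is maximal in `(H_F, ≤)` iff every forced component is
reachable in `G_T` from `U_∞`, and minimal iff `U_∞` is reachable in `G_T` from
every forced component. -/
theorem maximal_minimal_iff_reachability (F : Finset Vtx) (hF : IsFigure F)
    (ef : GArc → ℤ) (hef : IsEquilibrium F ef)
    (w0 : Vtx) (hw0 : OnOuterBoundary F w0)
    (D : Set GArc) (hD : IsTiling F D)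
    (h : Vtx → ℤ) (hh : IsHeightOf F ef D w0 h) :
    (MaximalInHF F ef w0 h ↔
      ∀ S : Set Vtx, IsForcedComponent F ef S →
        ∃ u v : Vtx, u ∈ fcomp F ef w0 ∧ v ∈ S ∧ GTReach F ef D u v) ∧
    (MinimalInHF F ef w0 h ↔
      ∀ S : Set Vtx, IsForcedComponent F ef S →
        ∃ u v : Vtx, u ∈ S ∧ v ∈ fcomp F ef w0 ∧ GTReach F ef D u v) := by
  have hw0V : w0 ∈ VF F := hw0.1
  have hHF : InHF F ef w0 h := height_inHF hD hh
  constructor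
  · constructor
    · -- maximal → reachability
      intro hmax S hS
      by_contra hno
      set h' := fun v => h v + (if ∃ u ∈ fcomp F ef w0, GTReach F ef D u v then 0 else 4)
        with hh'def
      have hh' : InHF F ef w0 h' := flip_up hef hD hh hw0V
      have hle : ∀ v ∈ VF F, h v ≤ h' v := by
        intro v _
        simp only [hh'def]
        split_ifs <;> omega
      have heq := hmax.2 h' hh' hle
      obtain ⟨v0, hv0, rfl⟩ := hS
      have hm : v0 ∈ fcomp F ef v0 := mem_fcomp_self hv0
      have hX : ¬∃ u ∈ fcomp F ef w0, GTReach F ef D u v0 := by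
        rintro ⟨u, hu, hr⟩
        exact hno ⟨u, v0, hu, hm, hr⟩
      have := heq v0 hv0
      simp only [hh'def, if_neg hX] at this
      omega
    · -- reachability → maximal
      intro hreach
      refine ⟨hHF, fun h' hh' hle v hv => ?_⟩
      obtain ⟨u, v', hu, hv', hr⟩ := hreach (fcomp F ef v) ⟨v, hv, rfl⟩
      have e0 : h' u - h u = 0 := by
        have := eqv_const hHF hh' hu.2
        rw [hHF.1, hh'.1] at this
        omega
      have e1 : h' v' - h v' ≤ 0 := by
        have := reach_le hh hh' hr
        omega
      have e2 : 0 ≤ h' v' - h v' := by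
        have := hle v' hv'.1
        omega
      have e3 := eqv_const hHF hh' hv'.2
      omega
  · constructor
    · -- minimal → reachability
      intro hmin S hS
      by_contra hno
      set h' := fun v => h v - (if ∃ u ∈ fcomp F ef w0, GTReach F ef D v u then 0 else 4)
        with hh'def
      have hh' : InHF F ef w0 h' := flip_down hef hD hh hw0V
      have hle : ∀ v ∈ VF F, h' v ≤ h v := by
        intro v _
        simp only [hh'def]
        split_ifs <;> omega
      have heq := hmin.2 h' hh' hle
      obtain ⟨v0, hv0, rfl⟩ := hS
      have hm : v0 ∈ fcomp F ef v0 := mem_fcomp_self hv0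
      have hX : ¬∃ u ∈ fcomp F ef w0, GTReach F ef D v0 u := by
        rintro ⟨u, hu, hr⟩
        exact hno ⟨v0, u, hm, hu, hr⟩
      have := heq v0 hv0
      simp only [hh'def, if_neg hX] at this
      omega
    · -- reachability → minimal
      intro hreach
      refine ⟨hHF, fun h' hh' hle v hv => ?_⟩
      obtain ⟨u, v', hu, hv', hr⟩ := hreach (fcomp F ef v) ⟨v, hv, rfl⟩
      have e0 : h' v' - h v' = 0 := by
        have := eqv_const hHF hh' hv'.2
        rw [hHF.1, hh'.1] at this
        omega
      have e1 : 0 ≤ h' u - h u := by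
        have := reach_le hh hh' hr
        omega
      have e2 : h' u - h u ≤ 0 := by
        have := hle u hu.1
        omega
      have e3 := eqv_const hHF hh' hu.2
      omega
end
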